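/- arXiv:2009.11134 — 7 statements merged into one kernel-verified Lean document; each statement's English description precedes it below -/
import Mathlib

section
/- Let n, p, k be positive integers with k ≤ n. Let V ∈ ℝ^{n×n} be symmetric positive definite, let Y ∈ ℝ^{p×n}, and set S = p^{-1} YᵀY. Let μ₁ ≥ ⋯ ≥ μ_n denote the eigenvalues of V^{-1/2} S V^{-1/2} (counted with multiplicity, ordered non-increasingly), and let W ∈ ℝ^{n×k} have orthonormal columns whose j-th column is an eigenvector of V^{-1/2} S V^{-1/2} associated with μ_j for j = 1,…,k. Then for every U ∈ ℝ^{n×k} of rank k, the matrix Uᵀ V^{-1} U is invertible and Tr{(Uᵀ V^{-1} S V^{-1} U)(Uᵀ V^{-1} U)^{-1}} ≤ μ₁ + ⋯ + μ_k; moreover equality holds for U = V^{1/2} W. -/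
open Matrix BigOperators

/-- The `k`-th largest eigenvalue (0-indexed: `k = 0` is the largest) of a
Hermitian real matrix, counted with multiplicity. -/
noncomputable def eigsDesc {n : ℕ} {A : Matrix (Fin n) (Fin n) ℝ} (hA : A.IsHermitian)
    (k : Fin n) : ℝ :=
  (hA.eigenvalues ∘ Tuple.sort hA.eigenvalues) k.rev

/-- The positive semidefinite square root of a positive semidefinite matrix, with the
definition `Matrix.PosSemidef.sqrt` had in the older Mathlib. -/
noncomputable def posSemidefSqrt {n : Type*} [Fintype n]
    [DecidableEq n] {A : Matrix n n ℝ} (hA : A.PosSemidef) : Matrix n n ℝ :=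
  hA.1.eigenvectorUnitary.1 * diagonal ((√·) ∘ hA.1.eigenvalues) *
    (star hA.1.eigenvectorUnitary : Matrix n n ℝ)

lemma aux_card_Ici (n k : ℕ) (hkn : k ≤ n) (h : n - k < n) :
    (Finset.Ici (⟨n - k, h⟩ : Fin n)).card = k := by
  rw [Fin.card_Ici]; simp only [Fin.val_mk]; omega

lemma aux_scalar (n k : ℕ) (hk : 0 < k) (hkn : k ≤ n) (h : n - k < n)
    (g : Fin n → ℝ) (hg : Monotone g) (c : Fin n → ℝ)
    (hc0 : ∀ i, 0 ≤ c i) (hc1 : ∀ i, c i ≤ 1) (hsum : ∑ i, c i = k) :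
    ∑ i, g i * c i ≤ ∑ i ∈ Finset.Ici (⟨n - k, h⟩ : Fin n), g i := by
  set t : ℝ := g ⟨n - k, h⟩ with ht
  have key : ∑ i, (g i - t) * c i ≤ ∑ i ∈ Finset.Ici (⟨n - k, h⟩ : Fin n), (g i - t) := by
    rw [← Finset.sum_filter_add_sum_filter_not Finset.univ
      (fun i => i ∈ Finset.Ici (⟨n - k, h⟩ : Fin n)) (fun i => (g i - t) * c i)]
    have h1 : ∑ i ∈ Finset.univ.filter (fun i => i ∈ Finset.Ici (⟨n - k, h⟩ : Fin n)),
        (g i - t) * c i ≤ ∑ i ∈ Finset.Ici (⟨n - k, h⟩ : Fin n), (g i - t) := by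
      rw [Finset.filter_mem_eq_inter, Finset.univ_inter]
      refine Finset.sum_le_sum fun i hi => ?_
      have hgt : t ≤ g i := hg (Finset.mem_Ici.mp hi)
      calc (g i - t) * c i ≤ (g i - t) * 1 :=
            mul_le_mul_of_nonneg_left (hc1 i) (by linarith)
        _ = g i - t := mul_one _
    have h2 : ∑ i ∈ Finset.univ.filter (fun i => i ∉ Finset.Ici (⟨n - k, h⟩ : Fin n)),
        (g i - t) * c i ≤ 0 := by
      refine Finset.sum_nonpos fun i hi => ?_
      have : ¬ ((⟨n - k, h⟩ : Fin n) ≤ i) := by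
        simpa [Finset.mem_Ici] using (Finset.mem_filter.mp hi).2
      have hgi : g i ≤ t := hg (le_of_not_ge this)
      exact mul_nonpos_of_nonpos_of_nonneg (by linarith) (hc0 i)
    linarith
  have expand : ∑ i, g i * c i = (∑ i, (g i - t) * c i) + t * k := by
    rw [← hsum, Finset.mul_sum, ← Finset.sum_add_distrib]
    exact Finset.sum_congr rfl fun i _ => by ring
  have expand2 : ∑ i ∈ Finset.Ici (⟨n - k, h⟩ : Fin n), (g i - t)
      = (∑ i ∈ Finset.Ici (⟨n - k, h⟩ : Fin n), g i) - t * k := by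
    rw [Finset.sum_sub_distrib, Finset.sum_const, aux_card_Ici n k hkn h]
    ring_nf
  linarith

lemma aux_reindex {n k : ℕ} (hk : 0 < k) (hkn : k ≤ n) (h : n - k < n)
    {A : Matrix (Fin n) (Fin n) ℝ} (hA : A.IsHermitian) :
    ∑ j : Fin k, eigsDesc hA (Fin.castLE hkn j)
      = ∑ i ∈ Finset.Ici (⟨n - k, h⟩ : Fin n),
          (hA.eigenvalues ∘ Tuple.sort hA.eigenvalues) i := by
  refine Finset.sum_nbij' (fun j => (Fin.castLE hkn j).rev)
    (fun i => ⟨min (n - 1 - i.val) (k-1), by omega⟩) ?_ ?_ ?_ ?_ ?_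
  · intro j _
    simp only [Finset.mem_Ici, Fin.le_def, Fin.val_rev, Fin.coe_castLE, Fin.val_mk]
    omega
  · intro i _; exact Finset.mem_univ _
  · intro j _; ext; simp only [Fin.val_rev, Fin.coe_castLE, Fin.val_mk]
    have := j.isLt; omega
  · intro i hi
    have : n - k ≤ i.val := by simpa [Fin.le_def] using Finset.mem_Ici.mp hi
    have := i.isLt
    ext; simp only [Fin.val_rev, Fin.coe_castLE, Fin.val_mk]; omega
  · intro j _; rfl

lemma aux_diag_nonneg {m : ℕ} {C : Matrix (Fin m) (Fin m) ℝ} (hC : C.PosSemidef)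
    (j : Fin m) : 0 ≤ C j j := by
  have := (posSemidef_iff_dotProduct_mulVec.mp hC).2 (Pi.single j 1)
  simpa [dotProduct, Pi.single_apply, mulVec, Finset.sum_ite_eq, Finset.sum_ite_eq'] using this

lemma aux_posDef_transpose_mul_self {m k : ℕ} (B : Matrix (Fin m) (Fin k) ℝ)
    (hB : Function.Injective B.mulVecLin) : (Bᵀ * B).PosDef := by
  refine Matrix.PosDef.of_dotProduct_mulVec_pos ?_ (fun x hx => ?_)
  · have := Matrix.isHermitian_conjTranspose_mul_self B
    simpa [Matrix.conjTranspose_eq_transpose_of_trivial] using this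
  · have hBx : B *ᵥ x ≠ 0 := by
      intro hbx
      exact hx (hB (by simpa [Matrix.mulVecLin_apply] using hbx))
    have : star x ⬝ᵥ (Bᵀ * B) *ᵥ x = (B *ᵥ x) ⬝ᵥ (B *ᵥ x) := by
      rw [← Matrix.mulVec_mulVec, Matrix.dotProduct_mulVec, Matrix.vecMul_transpose]
      simp
    rw [this]
    have : (0:ℝ) < star (B *ᵥ x) ⬝ᵥ (B *ᵥ x) :=
      Matrix.dotProduct_star_self_pos_iff.mpr hBx
    simpa using this

lemma aux_inj {m k : ℕ} (B : Matrix (Fin m) (Fin k) ℝ) (hB : B.rank = k) :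
    Function.Injective B.mulVecLin := by
  rw [← LinearMap.ker_eq_bot]
  have hrn := LinearMap.finrank_range_add_finrank_ker B.mulVecLin
  rw [Module.finrank_fintype_fun_eq_card, Fintype.card_fin] at hrn
  have hr : Module.finrank ℝ (LinearMap.range B.mulVecLin) = k := hB
  rw [← Submodule.finrank_eq_zero (R := ℝ)]
  omega

lemma aux_proj_sym {n k : ℕ} (B : Matrix (Fin n) (Fin k) ℝ) :
    (B * (Bᵀ * B)⁻¹ * Bᵀ)ᵀ = B * (Bᵀ * B)⁻¹ * Bᵀ := by
  have hGt : (Bᵀ * B)ᵀ = Bᵀ * B := by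
    rw [Matrix.transpose_mul, Matrix.transpose_transpose]
  have hGinvT : ((Bᵀ * B)⁻¹)ᵀ = (Bᵀ * B)⁻¹ := by
    rw [Matrix.transpose_nonsing_inv, hGt]
  rw [Matrix.transpose_mul, Matrix.transpose_mul, Matrix.transpose_transpose, hGinvT]
  simp only [Matrix.mul_assoc]

lemma aux_proj_idem {n k : ℕ} (B : Matrix (Fin n) (Fin k) ℝ)
    (hGdet : IsUnit (Bᵀ * B).det) :
    (B * (Bᵀ * B)⁻¹ * Bᵀ) * (B * (Bᵀ * B)⁻¹ * Bᵀ) = B * (Bᵀ * B)⁻¹ * Bᵀ := by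
  calc (B * (Bᵀ * B)⁻¹ * Bᵀ) * (B * (Bᵀ * B)⁻¹ * Bᵀ)
      = B * ((Bᵀ * B)⁻¹ * (Bᵀ * B)) * ((Bᵀ * B)⁻¹ * Bᵀ) := by
        simp only [Matrix.mul_assoc]
    _ = B * (Bᵀ * B)⁻¹ * Bᵀ := by
        rw [Matrix.nonsing_inv_mul _ hGdet, Matrix.mul_one]
        simp only [Matrix.mul_assoc]

lemma aux_proj_trace {n k : ℕ} (B : Matrix (Fin n) (Fin k) ℝ)
    (hGdet : IsUnit (Bᵀ * B).det) :
    (B * (Bᵀ * B)⁻¹ * Bᵀ).trace = (k : ℝ) := by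
  rw [Matrix.trace_mul_comm, ← Matrix.mul_assoc, Matrix.mul_nonsing_inv _ hGdet,
    Matrix.trace_one]
  simp

lemma aux_kyFan {n k : ℕ} (hk : 0 < k) (hkn : k ≤ n)
    {M : Matrix (Fin n) (Fin n) ℝ} (hMh : M.IsHermitian)
    (P : Matrix (Fin n) (Fin n) ℝ) (hPs : Pᵀ = P) (hPp : P * P = P)
    (hPt : P.trace = (k : ℝ)) :
    (M * P).trace ≤ ∑ j : Fin k, eigsDesc hMh (Fin.castLE hkn j) := by
  have h : n - k < n := by omega
  set Q : Matrix (Fin n) (Fin n) ℝ := (hMh.eigenvectorUnitary : Matrix (Fin n) (Fin n) ℝ)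
    with hQdef
  set μ : Fin n → ℝ := hMh.eigenvalues with hμdef
  have hstar : (star Q : Matrix (Fin n) (Fin n) ℝ) = Qᵀ := by
    rw [Matrix.star_eq_conjTranspose, Matrix.conjTranspose_eq_transpose_of_trivial]
  have hQQt : Q * Qᵀ = 1 := by
    rw [← hstar]; exact (Matrix.mem_unitaryGroup_iff).mp hMh.eigenvectorUnitary.2
  have hQtQ : Qᵀ * Q = 1 := by
    rw [← hstar]; exact (Matrix.mem_unitaryGroup_iff').mp hMh.eigenvectorUnitary.2
  have hspec : M = Q * diagonal μ * Qᵀ := by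
    have := hMh.spectral_theorem
    rw [← hstar]
    simpa [Matrix.conjTranspose_eq_transpose_of_trivial, Function.comp] using this
  set C : Matrix (Fin n) (Fin n) ℝ := Qᵀ * P * Q with hCdef
  have htr : (M * P).trace = ∑ j, μ j * C j j := by
    have e1 : M * P = (Q * diagonal μ) * (Qᵀ * P) := by
      rw [hspec]; noncomm_ring
    rw [e1, Matrix.trace_mul_comm, show Qᵀ * P * (Q * diagonal μ) = (Qᵀ * P * Q) * diagonal μ by
      noncomm_ring, Matrix.trace_mul_comm]
    simp [Matrix.trace, Matrix.diag, Matrix.diagonal_mul, hCdef]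
  have hPpsd : P.PosSemidef := by
    have h2 := Matrix.posSemidef_conjTranspose_mul_self P
    rwa [Matrix.conjTranspose_eq_transpose_of_trivial, hPs, hPp] at h2
  have hCpsd : C.PosSemidef := by
    have := hPpsd.conjTranspose_mul_mul_same Q
    rwa [Matrix.conjTranspose_eq_transpose_of_trivial] at this
  have h1Ppsd : ((1 : Matrix (Fin n) (Fin n) ℝ) - P).PosSemidef := by
    have hs : ((1 : Matrix (Fin n) (Fin n) ℝ) - P)ᵀ = 1 - P := by
      rw [Matrix.transpose_sub, Matrix.transpose_one, hPs]
    have hp : ((1 : Matrix (Fin n) (Fin n) ℝ) - P) * (1 - P) = 1 - P := by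
      rw [Matrix.mul_sub, Matrix.sub_mul, Matrix.sub_mul, hPp]
      simp
    have h2 := Matrix.posSemidef_conjTranspose_mul_self ((1 : Matrix (Fin n) (Fin n) ℝ) - P)
    rwa [Matrix.conjTranspose_eq_transpose_of_trivial, hs, hp] at h2
  have h1C : ((1 : Matrix (Fin n) (Fin n) ℝ) - C).PosSemidef := by
    have e : (1 : Matrix (Fin n) (Fin n) ℝ) - C = Qᵀ * (1 - P) * Q := by
      rw [Matrix.mul_sub, Matrix.sub_mul, Matrix.mul_one, hQtQ, hCdef]
    rw [e]
    have := h1Ppsd.conjTranspose_mul_mul_same Q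
    rwa [Matrix.conjTranspose_eq_transpose_of_trivial] at this
  have hc0 : ∀ j, 0 ≤ C j j := fun j => aux_diag_nonneg hCpsd j
  have hc1 : ∀ j, C j j ≤ 1 := by
    intro j
    have := aux_diag_nonneg h1C j
    simp only [Matrix.sub_apply, Matrix.one_apply_eq] at this
    linarith
  have hsumc : ∑ j, C j j = (k : ℝ) := by
    have : (∑ j, C j j) = C.trace := rfl
    rw [this, hCdef, Matrix.trace_mul_cycle, hQQt, Matrix.one_mul, hPt]
  set σ : Equiv.Perm (Fin n) := Tuple.sort μ with hσ
  have hg : Monotone (μ ∘ σ) := Tuple.monotone_sort μ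
  have hre : ∑ j, μ j * C j j = ∑ i, (μ ∘ σ) i * C (σ i) (σ i) := by
    rw [← Equiv.sum_comp σ (fun j => μ j * C j j)]
    rfl
  rw [htr, hre, aux_reindex hk hkn h hMh]
  exact aux_scalar n k hk hkn h (μ ∘ σ) hg (fun i => C (σ i) (σ i))
    (fun i => hc0 _) (fun i => hc1 _)
    (by rw [Equiv.sum_comp σ (fun j => C j j), hsumc])

/-- Proposition 1: for `S = p⁻¹ YᵀY` and `V` symmetric positive
definite, and `μ₁ ≥ ⋯ ≥ μ_n` the eigenvalues of `M = V^{-1/2} S V^{-1/2}`, for every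
`U ∈ ℝ^{n×k}` of rank `k` the matrix `Uᵀ V⁻¹ U` is invertible and
`Tr{(Uᵀ V⁻¹ S V⁻¹ U)(Uᵀ V⁻¹ U)⁻¹} ≤ μ₁ + ⋯ + μ_k`, with equality at `U = V^{1/2} W`,
where the columns of `W` are orthonormal eigenvectors of `M` for `μ₁,…,μ_k`. -/
theorem stmt0 (n p k : ℕ) (hn : 0 < n) (hp : 0 < p) (hk : 0 < k) (hkn : k ≤ n)
    (V : Matrix (Fin n) (Fin n) ℝ) (hV : V.PosDef)
    (Y : Matrix (Fin p) (Fin n) ℝ)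
    (S : Matrix (Fin n) (Fin n) ℝ) (hS : S = (p : ℝ)⁻¹ • (Yᵀ * Y))
    (M : Matrix (Fin n) (Fin n) ℝ)
    (hM : M = (posSemidefSqrt hV.posSemidef)⁻¹ * S * (posSemidefSqrt hV.posSemidef)⁻¹)
    (hMh : M.IsHermitian)
    (W : Matrix (Fin n) (Fin k) ℝ) (hW : Wᵀ * W = 1)
    (hWeig : ∀ j : Fin k,
      M.mulVec (fun i => W i j) = eigsDesc hMh (Fin.castLE hkn j) • (fun i => W i j)) :
    (∀ U : Matrix (Fin n) (Fin k) ℝ, U.rank = k →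
        IsUnit (Uᵀ * V⁻¹ * U).det ∧
        Matrix.trace ((Uᵀ * V⁻¹ * S * V⁻¹ * U) * (Uᵀ * V⁻¹ * U)⁻¹)
          ≤ ∑ j : Fin k, eigsDesc hMh (Fin.castLE hkn j)) ∧
    Matrix.trace
        (((posSemidefSqrt hV.posSemidef * W)ᵀ * V⁻¹ * S * V⁻¹ * (posSemidefSqrt hV.posSemidef * W)) *
          ((posSemidefSqrt hV.posSemidef * W)ᵀ * V⁻¹ * (posSemidefSqrt hV.posSemidef * W))⁻¹)
      = ∑ j : Fin k, eigsDesc hMh (Fin.castLE hkn j) := by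
  set R : Matrix (Fin n) (Fin n) ℝ := posSemidefSqrt hV.posSemidef with hRdef
  have hRsym : Rᵀ = R := by
    simp [hRdef, posSemidefSqrt, Matrix.transpose_mul, Matrix.star_eq_conjTranspose,
      Matrix.conjTranspose_eq_transpose_of_trivial, Matrix.mul_assoc]
  have hRR : R * R = V := by
    have hUU : (star hV.1.eigenvectorUnitary.1 : Matrix (Fin n) (Fin n) ℝ) *
        hV.1.eigenvectorUnitary.1 = 1 :=
      (Matrix.mem_unitaryGroup_iff').mp hV.1.eigenvectorUnitary.2
    have hsp := hV.1.spectral_theorem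
    have hd : diagonal ((√·) ∘ hV.1.eigenvalues) * diagonal ((√·) ∘ hV.1.eigenvalues)
        = diagonal hV.1.eigenvalues := by
      rw [Matrix.diagonal_mul_diagonal]
      congr 1; funext i
      exact Real.mul_self_sqrt (hV.posSemidef.eigenvalues_nonneg i)
    calc R * R = hV.1.eigenvectorUnitary.1 * (diagonal ((√·) ∘ hV.1.eigenvalues) *
          (((star hV.1.eigenvectorUnitary.1 : Matrix (Fin n) (Fin n) ℝ) *
          hV.1.eigenvectorUnitary.1) * diagonal ((√·) ∘ hV.1.eigenvalues))) *
          (star hV.1.eigenvectorUnitary.1 : Matrix (Fin n) (Fin n) ℝ) := by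
          simp only [hRdef, posSemidefSqrt, Matrix.mul_assoc]
      _ = V := by
          rw [hUU, Matrix.one_mul, hd]
          conv_rhs => rw [hsp]
          simp [Function.comp]
  have hRdetUnit : IsUnit R.det := by
    rw [isUnit_iff_ne_zero]
    intro h0
    have : V.det = 0 := by rw [← hRR, Matrix.det_mul, h0, mul_zero]
    exact (hV.det_pos.ne' this)
  have hVinv : V⁻¹ = R⁻¹ * R⁻¹ := by rw [← hRR, Matrix.mul_inv_rev]
  have hRinvT : (R⁻¹)ᵀ = R⁻¹ := by rw [Matrix.transpose_nonsing_inv, hRsym]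
  have h1 : ∀ X : Matrix (Fin n) (Fin k) ℝ, R⁻¹ * (R * X) = X := by
    intro X
    rw [← Matrix.mul_assoc, Matrix.nonsing_inv_mul _ hRdetUnit, Matrix.one_mul]
  have h2 : ∀ X : Matrix (Fin n) (Fin k) ℝ, R * (R⁻¹ * X) = X := by
    intro X
    rw [← Matrix.mul_assoc, Matrix.mul_nonsing_inv _ hRdetUnit, Matrix.one_mul]
  constructor
  · -- upper bound for every full-rank U
    intro U hU
    set B : Matrix (Fin n) (Fin k) ℝ := R⁻¹ * U with hBdef
    have hBrank : B.rank = k := by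
      rw [hBdef, Matrix.rank_mul_eq_right_of_isUnit_det _ _
        (Matrix.isUnit_nonsing_inv_det _ hRdetUnit)]
      exact hU
    have hGpd : (Bᵀ * B).PosDef := aux_posDef_transpose_mul_self B (aux_inj B hBrank)
    have hGdet : IsUnit (Bᵀ * B).det := isUnit_iff_ne_zero.mpr hGpd.det_pos.ne'
    have e1 : Uᵀ * V⁻¹ * U = Bᵀ * B := by
      rw [hVinv, hBdef, Matrix.transpose_mul, hRinvT]
      simp only [Matrix.mul_assoc]
    have e2 : Uᵀ * V⁻¹ * S * V⁻¹ * U = Bᵀ * M * B := by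
      rw [hVinv, hM, hBdef, Matrix.transpose_mul, hRinvT]
      simp only [Matrix.mul_assoc]
    refine ⟨e1 ▸ hGdet, ?_⟩
    rw [e1, e2]
    have etr : ((Bᵀ * M * B) * (Bᵀ * B)⁻¹).trace = (M * (B * (Bᵀ * B)⁻¹ * Bᵀ)).trace := by
      rw [show (Bᵀ * M * B) * (Bᵀ * B)⁻¹ = Bᵀ * (M * (B * (Bᵀ * B)⁻¹)) by
        simp only [Matrix.mul_assoc], Matrix.trace_mul_comm]
      simp only [Matrix.mul_assoc]
    rw [etr]
    exact aux_kyFan hk hkn hMh _ (aux_proj_sym B) (aux_proj_idem B hGdet)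
      (aux_proj_trace B hGdet)
  · -- equality at U = R * W
    have hA1 : (R * W)ᵀ * V⁻¹ * (R * W) = 1 := by
      rw [hVinv, Matrix.transpose_mul, hRsym]
      simp only [Matrix.mul_assoc, h1, h2]
      exact hW
    have hA2 : (R * W)ᵀ * V⁻¹ * S * V⁻¹ * (R * W) = Wᵀ * (M * W) := by
      rw [hVinv, hM, Matrix.transpose_mul, hRsym]
      simp only [Matrix.mul_assoc, h1, h2]
    rw [hA1, hA2, inv_one, Matrix.mul_one]
    have hMW : ∀ (i : Fin n) (j : Fin k),
        (M * W) i j = eigsDesc hMh (Fin.castLE hkn j) * W i j := by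
      intro i j
      have := congrFun (hWeig j) i
      simpa [Matrix.mulVec, dotProduct, Matrix.mul_apply] using this
    have hWj : ∀ j, ∑ i, W i j * W i j = 1 := by
      intro j
      have := congrFun (congrFun hW j) j
      simpa [Matrix.mul_apply, Matrix.one_apply] using this
    calc (Wᵀ * (M * W)).trace = ∑ j, ∑ i, W i j * ((M * W) i j) := by
          simp [Matrix.trace, Matrix.diag, Matrix.mul_apply, Matrix.transpose_apply]
      _ = ∑ j, eigsDesc hMh (Fin.castLE hkn j) * ∑ i, W i j * W i j := by
          refine Finset.sum_congr rfl fun j _ => ?_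
          rw [Finset.mul_sum]
          exact Finset.sum_congr rfl fun i _ => by rw [hMW]; ring
      _ = ∑ j, eigsDesc hMh (Fin.castLE hkn j) := by
          refine Finset.sum_congr rfl fun j _ => by rw [hWj, mul_one]
end

section
/- Let K > r be positive integers. Let H ∈ ℝ^{K×K} be symmetric, let V ∈ ℝ^{K×r} and W ∈ ℝ^{K×r} have orthonormal columns, let D = diag(d₁,…,d_r) with d₁,…,d_r > 0, let ε ∈ ℝ^{r×r}, and suppose H V = V D + W ε. Let V_ε ∈ ℝ^{K×r} have orthonormal columns each of which is an eigenvector of H, and suppose that for every j ∈ {1,…,r} and every k ∈ {1,…,K}, d_j ≠ Λ_k(P_{V_ε}^⊥ H P_{V_ε}^⊥). Then ‖P_{V_ε} − P_V P_{V_ε}‖_F ≤ ( Σ_{j=1}^r ‖ε_{·j}‖₂² / min_{k∈{1,…,K}} ( d_j − Λ_k(P_{V_ε}^⊥ H P_{V_ε}^⊥) )² )^{1/2}, where ε_{·j} denotes the j-th column of ε. -/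
open Matrix BigOperators

/-- Frobenius norm of a real matrix. -/
noncomputable def frob {a b : ℕ} (A : Matrix (Fin a) (Fin b) ℝ) : ℝ :=
  Real.sqrt (∑ i, ∑ j, A i j ^ 2)

lemma dot_self_eq_sum_sq {n : ℕ} (u : Fin n → ℝ) : u ⬝ᵥ u = ∑ i, u i ^ 2 := by
  simp [dotProduct, sq]

lemma mulVec_AtA {m n : ℕ} (A : Matrix (Fin m) (Fin n) ℝ) (u : Fin n → ℝ) :
    (A *ᵥ u) ⬝ᵥ (A *ᵥ u) = u ⬝ᵥ ((Aᵀ * A) *ᵥ u) := by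
  rw [← mulVec_mulVec, dotProduct_mulVec, mulVec_transpose, dotProduct_comm]

/-- Spectral lower bound: for a real symmetric matrix `B` and any `c`, `x`,
`min_k (c - λ_k)² ‖x‖² ≤ ‖(B - c)x‖²`. -/
lemma spec_lb {n : ℕ} [NeZero n] {B : Matrix (Fin n) (Fin n) ℝ} (hB : B.IsHermitian)
    (c : ℝ) (x : Fin n → ℝ) :
    (⨅ k, (c - hB.eigenvalues k) ^ 2) * ∑ i, x i ^ 2
      ≤ ∑ i, (B *ᵥ x - c • x) i ^ 2 := by
  set U : Matrix (Fin n) (Fin n) ℝ := (hB.eigenvectorUnitary : Matrix (Fin n) (Fin n) ℝ) with hU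
  have hsU : star U = Uᵀ := by rw [star_eq_conjTranspose, conjTranspose_eq_transpose_of_trivial]
  have hUtU : Uᵀ * U = 1 := by rw [← hsU]; exact Unitary.coe_star_mul_self hB.eigenvectorUnitary
  have hUUt : U * Uᵀ = 1 := by rw [← hsU]; exact Unitary.coe_mul_star_self hB.eigenvectorUnitary
  set a : Fin n → ℝ := Uᵀ *ᵥ x with ha
  have hxa : x = U *ᵥ a := by rw [ha, mulVec_mulVec, hUUt, one_mulVec]
  have hnormU : ∀ w : Fin n → ℝ, (U *ᵥ w) ⬝ᵥ (U *ᵥ w) = ∑ k, w k ^ 2 := by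
    intro w; rw [mulVec_AtA, hUtU, one_mulVec, dot_self_eq_sum_sq]
  have hBx : B *ᵥ x - c • x = U *ᵥ (fun k => (hB.eigenvalues k - c) * a k) := by
    have hspec : B = U * diagonal hB.eigenvalues * Uᵀ := by
      have := hB.spectral_theorem
      rw [← hsU]; simp at this; exact this
    have hBU : B * U = U * diagonal hB.eigenvalues := by
      conv_lhs => rw [hspec]
      rw [mul_assoc, hUtU, mul_one]
    have hdiag : (diagonal hB.eigenvalues) *ᵥ a = fun k => hB.eigenvalues k * a k := by
      funext k; simp [mulVec_diagonal]
    have key : B *ᵥ (U *ᵥ a) = U *ᵥ (fun k => hB.eigenvalues k * a k) := by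
      calc B *ᵥ (U *ᵥ a) = (B * U) *ᵥ a := mulVec_mulVec a B U
        _ = (U * diagonal hB.eigenvalues) *ᵥ a := by rw [hBU]
        _ = U *ᵥ (diagonal hB.eigenvalues *ᵥ a) := (mulVec_mulVec a U _).symm
        _ = U *ᵥ (fun k => hB.eigenvalues k * a k) := by rw [hdiag]
    have harg : ((fun k => hB.eigenvalues k * a k) - c • a)
        = fun k => (hB.eigenvalues k - c) * a k := by
      funext k; simp; ring
    rw [hxa, key, ← mulVec_smul, ← mulVec_sub, harg]
  calc (⨅ k, (c - hB.eigenvalues k) ^ 2) * ∑ i, x i ^ 2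
      = (⨅ k, (c - hB.eigenvalues k) ^ 2) * ∑ k, a k ^ 2 := by
        rw [← dot_self_eq_sum_sq, hxa, hnormU]
    _ = ∑ k, (⨅ k', (c - hB.eigenvalues k') ^ 2) * a k ^ 2 := by rw [Finset.mul_sum]
    _ ≤ ∑ k, (hB.eigenvalues k - c) ^ 2 * a k ^ 2 := by
        apply Finset.sum_le_sum
        intro k _
        have hbdd : BddBelow (Set.range fun k' => (c - hB.eigenvalues k') ^ 2) :=
          ⟨0, by rintro _ ⟨k', rfl⟩; positivity⟩
        have h1 : (⨅ k', (c - hB.eigenvalues k') ^ 2) ≤ (c - hB.eigenvalues k) ^ 2 :=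
          ciInf_le hbdd k
        have h2 : (c - hB.eigenvalues k) ^ 2 = (hB.eigenvalues k - c) ^ 2 := by ring
        nlinarith [sq_nonneg (a k)]
    _ = ∑ i, (B *ᵥ x - c • x) i ^ 2 := by
        rw [← dot_self_eq_sum_sq, hBx, hnormU]
        congr 1; funext k; ring

lemma iInf_comp_perm {n : ℕ} (g : Fin n → ℝ) (e : Equiv.Perm (Fin n)) :
    ⨅ k, g (e k) = ⨅ k, g k := by
  simp only [iInf]
  congr 1
  exact e.surjective.range_comp g

/-- The infimum over `eigsDesc` equals the infimum over `eigenvalues`. -/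
lemma iInf_eigsDesc {n : ℕ} {A : Matrix (Fin n) (Fin n) ℝ} (hA : A.IsHermitian) (c : ℝ) :
    (⨅ k, (c - eigsDesc hA k) ^ 2) = ⨅ k, (c - hA.eigenvalues k) ^ 2 := by
  have : (fun k => (c - eigsDesc hA k) ^ 2)
      = fun k => (c - hA.eigenvalues ((Fin.revPerm.trans (Tuple.sort hA.eigenvalues)) k)) ^ 2 := by
    funext k; rfl
  rw [this]
  exact iInf_comp_perm (fun k => (c - hA.eigenvalues k) ^ 2)
    (Fin.revPerm.trans (Tuple.sort hA.eigenvalues))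

lemma frob_sq_eq_trace {a b : ℕ} (A : Matrix (Fin a) (Fin b) ℝ) :
    ∑ i, ∑ j, A i j ^ 2 = trace (Aᵀ * A) := by
  rw [Finset.sum_comm]
  simp [trace, Matrix.diag, mul_apply, sq]

/-- eigenvector perturbation bound: with `H V = V D + W ε`,
`V_ε` orthonormal columns of eigenvectors of `H`, and `d_j` distinct from every
eigenvalue of `P_{V_ε}^⊥ H P_{V_ε}^⊥`, one has
`‖P_{V_ε} − P_V P_{V_ε}‖_F ≤ (Σ_j ‖ε_{·j}‖₂² / min_k (d_j − Λ_k)²)^{1/2}`. -/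
theorem stmt4 (K r : ℕ) (hr : 0 < r) (hKr : r < K)
    (H : Matrix (Fin K) (Fin K) ℝ) (hH : H.IsHermitian)
    (V W : Matrix (Fin K) (Fin r) ℝ) (hV : Vᵀ * V = 1) (hW : Wᵀ * W = 1)
    (d : Fin r → ℝ) (hd : ∀ j, 0 < d j)
    (ε : Matrix (Fin r) (Fin r) ℝ)
    (hHV : H * V = V * Matrix.diagonal d + W * ε)
    (Vε : Matrix (Fin K) (Fin r) ℝ) (hVε : Vεᵀ * Vε = 1)
    (hVεeig : ∀ j : Fin r, ∃ μ : ℝ,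
      H.mulVec (fun i => Vε i j) = μ • (fun i => Vε i j))
    (hPHP : ((1 - Vε * Vεᵀ) * H * (1 - Vε * Vεᵀ)).IsHermitian)
    (hgap : ∀ (j : Fin r) (k : Fin K), d j ≠ eigsDesc hPHP k) :
    frob (Vε * Vεᵀ - (V * Vᵀ) * (Vε * Vεᵀ))
      ≤ Real.sqrt (∑ j : Fin r,
          (∑ i : Fin r, ε i j ^ 2) / ⨅ k : Fin K, (d j - eigsDesc hPHP k) ^ 2) := by
  have hK : 0 < K := hr.trans hKr
  have : NeZero K := ⟨hK.ne'⟩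
  set P : Matrix (Fin K) (Fin K) ℝ := Vε * Vεᵀ with hPdef
  set Q : Matrix (Fin K) (Fin K) ℝ := V * Vᵀ with hQdef
  have hPt : Pᵀ = P := by rw [hPdef, transpose_mul, transpose_transpose]
  have hQt : Qᵀ = Q := by rw [hQdef, transpose_mul, transpose_transpose]
  have hPP : P * P = P := by
    rw [hPdef, Matrix.mul_assoc, ← Matrix.mul_assoc Vεᵀ Vε Vεᵀ, hVε, Matrix.one_mul]
  have hQQ : Q * Q = Q := by
    rw [hQdef, Matrix.mul_assoc, ← Matrix.mul_assoc Vᵀ V Vᵀ, hV, Matrix.one_mul]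
  have h1P : (1 - P) * (1 - P) = 1 - P := by
    have : (1 - P) * (1 - P) = 1 - P - P + P * P := by noncomm_ring
    rw [this, hPP]; abel
  have h1Pt : (1 - P)ᵀ = 1 - P := by rw [transpose_sub, transpose_one, hPt]
  -- eigen structure of Vε
  set μ : Fin r → ℝ := fun j => Classical.choose (hVεeig j) with hμ
  have hHVε : H * Vε = Vε * diagonal μ := by
    ext i j
    have hspec := congrFun (Classical.choose_spec (hVεeig j)) i
    simp only [mulVec, dotProduct, Pi.smul_apply, smul_eq_mul] at hspec
    rw [mul_apply, mul_diagonal]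
    rw [show ∑ k, H i k * Vε k j = μ j * Vε i j from hspec]
    ring
  have hHPproj : (1 - P) * (H * P) = 0 := by
    have h1 : H * P = Vε * diagonal μ * Vεᵀ := by
      rw [hPdef, ← Matrix.mul_assoc, hHVε]
    have h2 : P * (H * P) = H * P := by
      rw [h1, hPdef, Matrix.mul_assoc Vε Vεᵀ (Vε * diagonal μ * Vεᵀ),
        ← Matrix.mul_assoc Vεᵀ (Vε * diagonal μ) Vεᵀ,
        ← Matrix.mul_assoc Vεᵀ Vε (diagonal μ), hVε, Matrix.one_mul, ← Matrix.mul_assoc]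
    rw [sub_mul, one_mul, h2, sub_self]
  -- contraction of the projection 1 - P
  have hcontr : ∀ z : Fin K → ℝ, ∑ i, ((1 - P) *ᵥ z) i ^ 2 ≤ ∑ i, z i ^ 2 := by
    intro z
    rw [← dot_self_eq_sum_sq, ← dot_self_eq_sum_sq z, mulVec_AtA, h1Pt, h1P]
    have hPz : z ⬝ᵥ (P *ᵥ z) = (Vεᵀ *ᵥ z) ⬝ᵥ (Vεᵀ *ᵥ z) := by
      rw [mulVec_AtA, transpose_transpose]
    have hPz0 : 0 ≤ z ⬝ᵥ (P *ᵥ z) := by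
      rw [hPz, dot_self_eq_sum_sq]; positivity
    have : (1 - P) *ᵥ z = z - P *ᵥ z := by
      rw [sub_mulVec, one_mulVec]
    rw [this, dotProduct_sub]
    linarith
  -- per-column bound
  have hcolbound : ∀ j : Fin r,
      ∑ i, ((1 - P) *ᵥ (fun k => V k j)) i ^ 2
        ≤ (∑ i, ε i j ^ 2) / ⨅ k : Fin K, (d j - eigsDesc hPHP k) ^ 2 := by
    intro j
    set v : Fin K → ℝ := fun i => V i j with hv
    set εc : Fin r → ℝ := fun i => ε i j with hεc
    set x : Fin K → ℝ := (1 - P) *ᵥ v with hx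
    have hcol : H *ᵥ v = d j • v + W *ᵥ εc := by
      funext i
      have hent := congrFun (congrFun hHV i) j
      rw [Matrix.add_apply, Matrix.mul_diagonal] at hent
      rw [Matrix.mul_apply, Matrix.mul_apply] at hent
      simp only [mulVec, dotProduct, Pi.add_apply, Pi.smul_apply, smul_eq_mul, hv, hεc]
      rw [hent]; ring
    have hBx : ((1 - P) * H * (1 - P)) *ᵥ x - d j • x = (1 - P) *ᵥ (W *ᵥ εc) := by
      have em : (1 - P) * H * (1 - P) * (1 - P) = (1 - P) * H := by
        calc (1 - P) * H * (1 - P) * (1 - P) = (1 - P) * H * ((1 - P) * (1 - P)) := by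
              rw [mul_assoc]
          _ = (1 - P) * H * (1 - P) := by rw [h1P]
          _ = (1 - P) * H - (1 - P) * (H * P) := by noncomm_ring
          _ = (1 - P) * H := by rw [hHPproj, sub_zero]
      have e1 : ((1 - P) * H * (1 - P)) *ᵥ x = ((1 - P) * H) *ᵥ v := by
        rw [hx, mulVec_mulVec, em]
      rw [e1, ← mulVec_mulVec, hcol, mulVec_add, mulVec_smul, hx]
      abel
    have hspec := spec_lb hPHP (d j) x
    rw [hBx] at hspec
    have hWiso : ∑ i, (W *ᵥ εc) i ^ 2 = ∑ i, εc i ^ 2 := by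
      rw [← dot_self_eq_sum_sq, mulVec_AtA, hW, one_mulVec, dot_self_eq_sum_sq]
    have hchain : (⨅ k, (d j - hPHP.eigenvalues k) ^ 2) * ∑ i, x i ^ 2 ≤ ∑ i, εc i ^ 2 := by
      calc (⨅ k, (d j - hPHP.eigenvalues k) ^ 2) * ∑ i, x i ^ 2
          ≤ ∑ i, ((1 - P) *ᵥ (W *ᵥ εc)) i ^ 2 := hspec
        _ ≤ ∑ i, (W *ᵥ εc) i ^ 2 := hcontr _
        _ = ∑ i, εc i ^ 2 := hWiso
    have hinf_eq : (⨅ k : Fin K, (d j - eigsDesc hPHP k) ^ 2)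
        = ⨅ k, (d j - hPHP.eigenvalues k) ^ 2 := iInf_eigsDesc hPHP (d j)
    have hm_pos : 0 < ⨅ k : Fin K, (d j - eigsDesc hPHP k) ^ 2 := by
      obtain ⟨k0, hk0⟩ := Finite.exists_min (fun k : Fin K => (d j - eigsDesc hPHP k) ^ 2)
      have h0 : 0 < (d j - eigsDesc hPHP k0) ^ 2 := by
        have hne : d j - eigsDesc hPHP k0 ≠ 0 := sub_ne_zero.mpr (hgap j k0)
        exact lt_of_le_of_ne (sq_nonneg _) (Ne.symm (pow_ne_zero 2 hne))
      exact h0.trans_le (le_ciInf hk0)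
    rw [div_eq_mul_inv, ← div_eq_mul_inv, le_div_iff₀ hm_pos, mul_comm, hinf_eq]
    exact hchain
  -- Frobenius norm equality
  have hMX : frob (P - Q * P) = frob ((1 - P) * V) := by
    have hMt : (P - Q * P)ᵀ = P - P * Q := by
      rw [transpose_sub, transpose_mul Q P, hPt, hQt]
    have hMM : (P - Q * P)ᵀ * (P - Q * P) = P - P * (Q * P) := by
      rw [hMt]
      have expand : (P - P * Q) * (P - Q * P)
          = P * P - P * (Q * P) - P * (Q * P) + P * ((Q * Q) * P) := by noncomm_ring
      rw [expand, hPP, hQQ]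
      abel
    have hXt : ((1 - P) * V)ᵀ = Vᵀ * (1 - P) := by rw [transpose_mul (1 - P) V, h1Pt]
    have hXX : ((1 - P) * V)ᵀ * ((1 - P) * V) = 1 - Vᵀ * (P * V) := by
      rw [hXt, Matrix.mul_assoc Vᵀ (1 - P) ((1 - P) * V),
        ← Matrix.mul_assoc (1 - P) (1 - P) V, h1P, Matrix.sub_mul, Matrix.one_mul,
        Matrix.mul_sub, hV]
    have htr : trace ((P - Q * P)ᵀ * (P - Q * P)) = trace (((1 - P) * V)ᵀ * ((1 - P) * V)) := by
      rw [hMM, hXX]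
      have htrP : trace P = (r : ℝ) := by
        rw [hPdef, trace_mul_comm, hVε, trace_one]
        simp
      have h1 : trace (P - P * (Q * P)) = trace P - trace (P * (Q * P)) := trace_sub _ _
      have h2 : trace ((1 : Matrix (Fin r) (Fin r) ℝ) - Vᵀ * (P * V))
          = (r : ℝ) - trace (Vᵀ * (P * V)) := by
        rw [trace_sub, trace_one]; simp
      have h3 : trace (P * (Q * P)) = trace (Q * P) := by
        rw [trace_mul_comm P (Q * P), Matrix.mul_assoc Q P P, hPP]
      have h4 : trace (Vᵀ * (P * V)) = trace (Q * P) := by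
        rw [trace_mul_comm Vᵀ (P * V), Matrix.mul_assoc P V Vᵀ, ← hQdef, trace_mul_comm P Q]
      rw [h1, h2, h3, h4, htrP]
    unfold frob
    rw [frob_sq_eq_trace, frob_sq_eq_trace, htr]
  -- finish
  rw [hMX]
  unfold frob
  apply Real.sqrt_le_sqrt
  have hentry : ∀ (i : Fin K) (j : Fin r),
      ((1 - P) * V : Matrix (Fin K) (Fin r) ℝ) i j = ((1 - P) *ᵥ (fun k => V k j)) i := by
    intro i j
    simp [mul_apply, mulVec, dotProduct]
  have hsum : ∑ i, ∑ j, ((1 - P) * V : Matrix (Fin K) (Fin r) ℝ) i j ^ 2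
      = ∑ j, ∑ i, ((1 - P) *ᵥ (fun k => V k j)) i ^ 2 := by
    rw [Finset.sum_comm]
    exact Finset.sum_congr rfl fun j _ => Finset.sum_congr rfl fun i _ => by rw [hentry i j]
  rw [hsum]
  exact Finset.sum_le_sum fun j _ => hcolbound j
end

section
/- Let K > r be positive integers. Let H ∈ ℝ^{K×K} be symmetric, let V ∈ ℝ^{K×r} and W ∈ ℝ^{K×r} have orthonormal columns, let D = diag(d₁,…,d_r) with d₁,…,d_r > 0, let ε ∈ ℝ^{r×r}, and suppose H V = V D + W ε. Let V_ε ∈ ℝ^{K×r} have orthonormal columns each of which is an eigenvector of H, and suppose that for every j ∈ {1,…,r} and every k ∈ {1,…,K}, d_j ≠ Λ_k(P_{V_ε}^⊥ H P_{V_ε}^⊥). Then ‖P_{V_ε} − P_V‖_F ≤ 2 ( Σ_{j=1}^r ‖ε_{·j}‖₂² / min_{k∈{1,…,K}} ( d_j − Λ_k(P_{V_ε}^⊥ H P_{V_ε}^⊥) )² )^{1/2}, where ε_{·j} denotes the j-th column of ε. -/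
open Matrix BigOperators

open scoped RealInnerProductSpace

/-- Auxiliary: `v ⬝ᵥ (Mᵀ N) w = (M v) ⬝ᵥ (N w)`. -/
lemma dot_aux {m n p : ℕ} (M : Matrix (Fin m) (Fin n) ℝ) (N : Matrix (Fin m) (Fin p) ℝ)
    (v : Fin n → ℝ) (w : Fin p → ℝ) :
    v ⬝ᵥ ((Mᵀ * N).mulVec w) = (M.mulVec v) ⬝ᵥ (N.mulVec w) := by
  rw [← Matrix.mulVec_mulVec, Matrix.dotProduct_mulVec v Mᵀ, Matrix.vecMul_transpose]

lemma iInf_perm_eq {ι : Type*} (e : Equiv.Perm ι) (g : ι → ℝ) :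
    ⨅ k, g (e k) = ⨅ k, g k := by
  rw [iInf, iInf]
  congr 1
  exact e.surjective.range_comp g

lemma sum_sq_eq_dot {n : ℕ} (v : Fin n → ℝ) : ∑ i, v i ^ 2 = v ⬝ᵥ v := by
  simp [dotProduct, sq]

/-- Auxiliary spectral bound: if `A` is Hermitian then
`(⨅ k, (c - λ_k)²) ‖x‖² ≤ ‖A x - c x‖²`. -/
lemma resolvent_bound {n : ℕ} [NeZero n] {A : Matrix (Fin n) (Fin n) ℝ}
    (hA : A.IsHermitian) (c : ℝ) (x : Fin n → ℝ) :
    (⨅ k, (c - hA.eigenvalues k)^2) * (∑ i, x i ^ 2)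
      ≤ ∑ i, (A.mulVec x i - c * x i) ^ 2 := by
  have hAt : Aᵀ = A := by
    ext i j; rw [transpose_apply]; simpa using (congrFun (congrFun hA.eq j) i).symm
  set e := hA.eigenvectorBasis with he
  set X : EuclideanSpace ℝ (Fin n) := WithLp.toLp 2 x with hX
  set Y : EuclideanSpace ℝ (Fin n) := WithLp.toLp 2 (fun i => A.mulVec x i - c * x i) with hY
  have hinner : ∀ u v : EuclideanSpace ℝ (Fin n), ⟪u, v⟫ = ∑ i, u i * v i := by
    intro u v
    simp [PiLp.inner_apply, RCLike.inner_apply, mul_comm]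
  have parseval : ∀ Z : EuclideanSpace ℝ (Fin n), ∑ k, ⟪e k, Z⟫^2 = ∑ i, Z i * Z i := by
    intro Z
    rw [← hinner Z Z, ← e.sum_inner_mul_inner Z Z]
    congr 1; ext k
    rw [real_inner_comm Z (e k), sq]
  have key : ∀ k, ⟪e k, Y⟫ = (hA.eigenvalues k - c) * ⟪e k, X⟫ := by
    intro k
    have h1 : ∑ i, (e k : EuclideanSpace ℝ (Fin n)) i * A.mulVec x i
        = hA.eigenvalues k * ∑ i, (e k : EuclideanSpace ℝ (Fin n)) i * x i := by
      have h2 : ((e k : EuclideanSpace ℝ (Fin n)) : Fin n → ℝ) ⬝ᵥ A.mulVec x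
          = A.mulVec (e k) ⬝ᵥ x := by
        rw [dotProduct_mulVec, ← mulVec_transpose, hAt]
      have h3 : A.mulVec (e k) ⬝ᵥ x
          = hA.eigenvalues k * (((e k : EuclideanSpace ℝ (Fin n)) : Fin n → ℝ) ⬝ᵥ x) := by
        simpa [smul_dotProduct] using congrArg (fun v => v ⬝ᵥ x) (hA.mulVec_eigenvectorBasis k)
      simpa [dotProduct] using h2.trans h3
    rw [hinner, hinner]
    have h4 : ∀ i, (e k : EuclideanSpace ℝ (Fin n)) i * Y i
        = (e k : EuclideanSpace ℝ (Fin n)) i * (A.mulVec x i)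
          - c * ((e k : EuclideanSpace ℝ (Fin n)) i * x i) := by
      intro i; simp only [hY]; ring
    rw [Finset.sum_congr rfl (fun i _ => h4 i), Finset.sum_sub_distrib, h1, ← Finset.mul_sum]
    have h5 : ∀ i, (e k : EuclideanSpace ℝ (Fin n)) i * X i
        = (e k : EuclideanSpace ℝ (Fin n)) i * x i := fun i => rfl
    rw [Finset.sum_congr rfl (fun i _ => h5 i)]
    ring
  have hm_le : ∀ k, (⨅ k, (c - hA.eigenvalues k)^2) ≤ (hA.eigenvalues k - c)^2 := by
    intro k
    have hsq : (hA.eigenvalues k - c)^2 = (c - hA.eigenvalues k)^2 := by ring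
    rw [hsq]
    exact ciInf_le (Set.Finite.bddBelow (Set.finite_range _)) k
  calc (⨅ k, (c - hA.eigenvalues k)^2) * (∑ i, x i ^ 2)
      = (⨅ k, (c - hA.eigenvalues k)^2) * ∑ k, ⟪e k, X⟫^2 := by
        rw [parseval X]; congr 1; apply Finset.sum_congr rfl; intros; rw [sq]
    _ = ∑ k, (⨅ k, (c - hA.eigenvalues k)^2) * ⟪e k, X⟫^2 := Finset.mul_sum _ _ _
    _ ≤ ∑ k, (hA.eigenvalues k - c)^2 * ⟪e k, X⟫^2 := by
        apply Finset.sum_le_sum; intro k _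
        exact mul_le_mul_of_nonneg_right (hm_le k) (sq_nonneg _)
    _ = ∑ k, ⟪e k, Y⟫^2 := by
        apply Finset.sum_congr rfl; intro k _; rw [key k, mul_pow]
    _ = ∑ i, (A.mulVec x i - c * x i) ^ 2 := by
        rw [parseval Y]; apply Finset.sum_congr rfl; intros; rw [sq]

/-- eigenvector perturbation bound: with `H V = V D + W ε`,
`V_ε` orthonormal columns of eigenvectors of `H`, and `d_j` distinct from every
eigenvalue of `P_{V_ε}^⊥ H P_{V_ε}^⊥`, one has
`‖P_{V_ε} − P_V‖_F ≤ 2 (Σ_j ‖ε_{·j}‖₂² / min_k (d_j − Λ_k)²)^{1/2}`. -/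
theorem stmt6 (K r : ℕ) (hr : 0 < r) (hKr : r < K)
    (H : Matrix (Fin K) (Fin K) ℝ) (hH : H.IsHermitian)
    (V W : Matrix (Fin K) (Fin r) ℝ) (hV : Vᵀ * V = 1) (hW : Wᵀ * W = 1)
    (d : Fin r → ℝ) (hd : ∀ j, 0 < d j)
    (ε : Matrix (Fin r) (Fin r) ℝ)
    (hHV : H * V = V * Matrix.diagonal d + W * ε)
    (Vε : Matrix (Fin K) (Fin r) ℝ) (hVε : Vεᵀ * Vε = 1)
    (hVεeig : ∀ j : Fin r, ∃ μ : ℝ,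
      H.mulVec (fun i => Vε i j) = μ • (fun i => Vε i j))
    (hPHP : ((1 - Vε * Vεᵀ) * H * (1 - Vε * Vεᵀ)).IsHermitian)
    (hgap : ∀ (j : Fin r) (k : Fin K), d j ≠ eigsDesc hPHP k) :
    frob (Vε * Vεᵀ - V * Vᵀ)
      ≤ 2 * Real.sqrt (∑ j : Fin r,
          (∑ i : Fin r, ε i j ^ 2) / ⨅ k : Fin K, (d j - eigsDesc hPHP k) ^ 2) := by
  classical
  have hK : 0 < K := hr.trans hKr
  haveI : NeZero K := ⟨hK.ne'⟩
  have hHsym : Hᵀ = H := by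
    ext i j; rw [transpose_apply]; simpa using (congrFun (congrFun hH.eq j) i).symm
  set P : Matrix (Fin K) (Fin K) ℝ := Vε * Vεᵀ with hPdef
  set Q : Matrix (Fin K) (Fin K) ℝ := V * Vᵀ with hQdef
  set Pp : Matrix (Fin K) (Fin K) ℝ := 1 - P with hPpdef
  -- basic algebra
  have hPP : P * P = P := by
    rw [hPdef, Matrix.mul_assoc, ← Matrix.mul_assoc Vεᵀ, hVε, Matrix.one_mul]
  have hPsym : Pᵀ = P := by
    rw [hPdef, Matrix.transpose_mul, Matrix.transpose_transpose]
  have hPpsym : Ppᵀ = Pp := by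
    rw [hPpdef, Matrix.transpose_sub, Matrix.transpose_one, hPsym]
  have hPpPp : Pp * Pp = Pp := by
    rw [hPpdef, sub_mul, one_mul, mul_sub, mul_one, hPP, sub_self, sub_zero]
  -- H commutes with P
  choose μ hμ using hVεeig
  have hHVε : H * Vε = Vε * Matrix.diagonal μ := by
    ext i j
    have h1 := congrFun (hμ j) i
    simp only [Matrix.mulVec, dotProduct, Pi.smul_apply, smul_eq_mul] at h1
    rw [Matrix.mul_apply, Matrix.mul_diagonal]
    rw [h1]; ring
  have hHP : H * P = P * H := by
    have hVεH : Vεᵀ * H = Matrix.diagonal μ * Vεᵀ := by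
      have h2 := congrArg Matrix.transpose hHVε
      rw [Matrix.transpose_mul, Matrix.transpose_mul, hHsym, Matrix.diagonal_transpose] at h2
      exact h2
    rw [hPdef, ← Matrix.mul_assoc, hHVε, Matrix.mul_assoc Vε Vεᵀ H, hVεH, Matrix.mul_assoc]
  have hHPp : H * Pp = Pp * H := by
    rw [hPpdef, mul_sub, sub_mul, mul_one, one_mul, hHP]
  -- the projected matrix
  set A : Matrix (Fin K) (Fin K) ℝ := Pp * H * Pp with hAdef
  have hAPp : A = Pp * H := by
    calc A = Pp * (H * Pp) := by rw [hAdef, Matrix.mul_assoc]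
    _ = Pp * (Pp * H) := by rw [hHPp]
    _ = Pp * Pp * H := by rw [Matrix.mul_assoc]
    _ = Pp * H := by rw [hPpPp]
  set X : Matrix (Fin K) (Fin r) ℝ := Pp * V with hXdef
  set Z : Matrix (Fin K) (Fin r) ℝ := Pp * (W * ε) with hZdef
  have hAX : A * X = X * Matrix.diagonal d + Z := by
    have e1 : A * X = Pp * (H * V) := by
      rw [hAPp, hXdef]
      calc Pp * H * (Pp * V) = Pp * H * Pp * V := (Matrix.mul_assoc (Pp * H) Pp V).symm
        _ = Pp * (H * Pp) * V := by rw [Matrix.mul_assoc Pp H Pp]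
        _ = Pp * (Pp * H) * V := by rw [hHPp]
        _ = Pp * Pp * H * V := by rw [← Matrix.mul_assoc Pp Pp H]
        _ = Pp * H * V := by rw [hPpPp]
        _ = Pp * (H * V) := Matrix.mul_assoc Pp H V
    rw [e1, hHV, Matrix.mul_add, hXdef, hZdef, ← Matrix.mul_assoc]
  -- eigenvalue reindexing
  have heigpt : ∀ k : Fin K, eigsDesc hPHP k
      = hPHP.eigenvalues ((Fin.revPerm.trans (Tuple.sort hPHP.eigenvalues)) k) := by
    intro k
    simp only [eigsDesc, Function.comp_apply, Equiv.trans_apply]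
    congr 1
  have heig : ∀ j : Fin r,
      (⨅ k, (d j - eigsDesc hPHP k)^2) = ⨅ k, (d j - hPHP.eigenvalues k)^2 := by
    intro j
    rw [iInf_congr (fun k => by rw [heigpt k])]
    exact iInf_perm_eq (Fin.revPerm.trans (Tuple.sort hPHP.eigenvalues))
      (fun k => (d j - hPHP.eigenvalues k)^2)
  have hgap' : ∀ (j : Fin r) (k : Fin K), d j ≠ hPHP.eigenvalues k := by
    intro j k
    have h := hgap j ((Fin.revPerm.trans (Tuple.sort hPHP.eigenvalues)).symm k)
    rw [heigpt, Equiv.apply_symm_apply] at h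
    exact h
  have hmin_pos : ∀ j : Fin r, 0 < ⨅ k, (d j - hPHP.eigenvalues k)^2 := by
    intro j
    obtain ⟨k0, _, hk0⟩ := Finset.exists_min_image Finset.univ
      (fun k => (d j - hPHP.eigenvalues k)^2) ⟨⟨0, hK⟩, Finset.mem_univ _⟩
    have h1 : (d j - hPHP.eigenvalues k0)^2 ≤ ⨅ k, (d j - hPHP.eigenvalues k)^2 :=
      le_ciInf (fun k => hk0 k (Finset.mem_univ k))
    exact lt_of_lt_of_le (sq_pos_of_ne_zero (sub_ne_zero.mpr (hgap' j k0))) h1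
  -- contraction and isometry facts
  have hPp_contract : ∀ v : Fin K → ℝ,
      ∑ i, (Pp.mulVec v) i ^ 2 ≤ ∑ i, v i ^ 2 := by
    intro v
    rw [sum_sq_eq_dot, sum_sq_eq_dot]
    have h1 : (Pp.mulVec v) ⬝ᵥ (Pp.mulVec v) = v ⬝ᵥ (Pp.mulVec v) := by
      rw [← dot_aux Pp Pp v v, hPpsym, hPpPp]
    have h2 : (0:ℝ) ≤ v ⬝ᵥ (P.mulVec v) := by
      have h3 : v ⬝ᵥ (P.mulVec v) = (Vεᵀ.mulVec v) ⬝ᵥ (Vεᵀ.mulVec v) := by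
        rw [← dot_aux Vεᵀ Vεᵀ v v, Matrix.transpose_transpose, ← hPdef]
      rw [h3, ← sum_sq_eq_dot]
      exact Finset.sum_nonneg (fun i _ => sq_nonneg _)
    have h4 : v ⬝ᵥ (Pp.mulVec v) = v ⬝ᵥ v - v ⬝ᵥ (P.mulVec v) := by
      rw [hPpdef, Matrix.sub_mulVec, Matrix.one_mulVec, dotProduct_sub]
    rw [h1, h4]
    linarith
  have hW_iso : ∀ v : Fin r → ℝ, ∑ i, (W.mulVec v) i ^ 2 = ∑ i, v i ^ 2 := by
    intro v
    rw [sum_sq_eq_dot, sum_sq_eq_dot, ← dot_aux W W v v, hW, Matrix.one_mulVec]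
  -- per-column bound
  have hcol : ∀ j : Fin r,
      ∑ i, X i j ^ 2 ≤ (∑ i, ε i j ^ 2) / ⨅ k, (d j - eigsDesc hPHP k)^2 := by
    intro j
    rw [heig j, le_div_iff₀ (hmin_pos j)]
    set xj : Fin K → ℝ := fun i => X i j with hxj
    set zj : Fin K → ℝ := fun i => Z i j with hzj
    have hres := resolvent_bound hPHP (d j) xj
    have hcoleq : ∀ i, A.mulVec xj i - d j * xj i = zj i := by
      intro i
      have h5 : A.mulVec xj i = (A * X) i j := by
        simp [Matrix.mulVec, dotProduct, Matrix.mul_apply, hxj]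
      rw [h5, hAX]
      simp [Matrix.add_apply, Matrix.mul_diagonal, hxj, hzj]
      ring
    have hres2 : (⨅ k, (d j - hPHP.eigenvalues k)^2) * (∑ i, xj i ^ 2) ≤ ∑ i, zj i ^ 2 := by
      refine le_trans hres (le_of_eq ?_)
      exact Finset.sum_congr rfl (fun i _ => by rw [hcoleq i])
    have hz_le : ∑ i, zj i ^ 2 ≤ ∑ i, ε i j ^ 2 := by
      set wj : Fin K → ℝ := fun i => (W * ε) i j with hwj
      have h6 : zj = Pp.mulVec wj := by
        funext i
        simp [hzj, hwj, hZdef, Matrix.mulVec, dotProduct, Matrix.mul_apply]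
      have h7 : wj = W.mulVec (fun i => ε i j) := by
        funext i
        simp [hwj, Matrix.mulVec, dotProduct, Matrix.mul_apply]
      calc ∑ i, zj i ^ 2 = ∑ i, (Pp.mulVec wj) i ^ 2 := by rw [h6]
        _ ≤ ∑ i, wj i ^ 2 := hPp_contract wj
        _ = ∑ i, (W.mulVec (fun i => ε i j)) i ^ 2 := by rw [h7]
        _ = ∑ i, ε i j ^ 2 := hW_iso _
    calc (∑ i, X i j ^ 2) * ⨅ k, (d j - hPHP.eigenvalues k)^2
        = (⨅ k, (d j - hPHP.eigenvalues k)^2) * ∑ i, xj i ^ 2 := by rw [mul_comm]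
      _ ≤ ∑ i, zj i ^ 2 := hres2
      _ ≤ ∑ i, ε i j ^ 2 := hz_le
  -- Frobenius identity
  have htraceP : (P.trace : ℝ) = r := by
    rw [hPdef, Matrix.trace_mul_comm, hVε, Matrix.trace_one]
    simp
  have htraceQ : (Q.trace : ℝ) = r := by
    rw [hQdef, Matrix.trace_mul_comm, hV, Matrix.trace_one]
    simp
  have hfrob_sq : ∑ i, ∑ j, (P - Q) i j ^ 2 = 2 * ∑ j, ∑ i, X i j ^ 2 := by
    have hQsym : Qᵀ = Q := by rw [hQdef, Matrix.transpose_mul, Matrix.transpose_transpose]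
    have hMsym : (P - Q)ᵀ = P - Q := by rw [Matrix.transpose_sub, hPsym, hQsym]
    have h8 : ∑ i, ∑ j, (P - Q) i j ^ 2 = ((P - Q) * (P - Q)).trace := by
      rw [Matrix.trace]
      rw [Finset.sum_comm]
      apply Finset.sum_congr rfl
      intro j _
      rw [Matrix.diag_apply, Matrix.mul_apply]
      apply Finset.sum_congr rfl
      intro i _
      have h : (P - Q) j i = (P - Q) i j := by
        conv_lhs => rw [← hMsym]
        rw [Matrix.transpose_apply]
      rw [h]; ring
    have hQQ : Q * Q = Q := by
      rw [hQdef, Matrix.mul_assoc, ← Matrix.mul_assoc Vᵀ, hV, Matrix.one_mul]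
    have h9 : ((P - Q) * (P - Q)).trace = 2 * (r - (P * Q).trace) := by
      rw [sub_mul, mul_sub, mul_sub, Matrix.trace_sub, Matrix.trace_sub, Matrix.trace_sub,
        hPP, hQQ, Matrix.trace_mul_comm Q P, htraceP, htraceQ]
      ring
    have h10 : ∑ j, ∑ i, X i j ^ 2 = r - (P * Q).trace := by
      have h11 : ∑ j, ∑ i, X i j ^ 2 = (Xᵀ * X).trace := by
        rw [Matrix.trace]
        apply Finset.sum_congr rfl
        intro j _
        rw [Matrix.diag_apply, Matrix.mul_apply]
        apply Finset.sum_congr rfl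
        intro i _
        rw [Matrix.transpose_apply]; ring
      have h12 : Xᵀ * X = Vᵀ * (Pp * V) := by
        rw [hXdef, Matrix.transpose_mul, hPpsym, Matrix.mul_assoc, ← Matrix.mul_assoc Pp Pp,
          hPpPp]
      have h13 : Vᵀ * (Pp * V) = Vᵀ * V - Vᵀ * (P * V) := by
        rw [hPpdef, Matrix.sub_mul, Matrix.one_mul, Matrix.mul_sub]
      have h14 : (Vᵀ * (P * V)).trace = (P * Q).trace := by
        rw [Matrix.trace_mul_comm, Matrix.mul_assoc, ← hQdef]
      rw [h11, h12, h13, Matrix.trace_sub, hV, Matrix.trace_one, h14]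
      simp
    rw [h8, h9, h10]
  -- assemble
  set B : ℝ := ∑ j : Fin r,
      (∑ i : Fin r, ε i j ^ 2) / ⨅ k : Fin K, (d j - eigsDesc hPHP k) ^ 2 with hBdef
  have hB_nonneg : 0 ≤ B := by
    apply Finset.sum_nonneg
    intro j _
    apply div_nonneg (Finset.sum_nonneg (fun i _ => sq_nonneg _))
    rw [heig j]
    exact (hmin_pos j).le
  have hSxB : ∑ j, ∑ i, X i j ^ 2 ≤ B := Finset.sum_le_sum (fun j _ => hcol j)
  have hfinal : ∑ i, ∑ j, (P - Q) i j ^ 2 ≤ 4 * B := by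
    rw [hfrob_sq]
    linarith
  calc frob (P - Q) = Real.sqrt (∑ i, ∑ j, (P - Q) i j ^ 2) := rfl
    _ ≤ Real.sqrt (4 * B) := Real.sqrt_le_sqrt hfinal
    _ = 2 * Real.sqrt B := by
        rw [show (4:ℝ) * B = (2:ℝ)^2 * B by ring, Real.sqrt_mul (sq_nonneg 2),
          Real.sqrt_sq (by norm_num : (0:ℝ) ≤ 2)]
end

section
/- Let K be a positive integer, let D = diag(d₁,…,d_K) with d₁,…,d_K > 0, and let M ∈ ℝ^{K×K} be symmetric. Then there exists t₀ > 0 such that D + t M is symmetric positive definite for all real t with |t| < t₀, and for every i, j ∈ {1,…,K}, lim_{t→0} [ ((D + t M)^{1/2})_{ij} − (D^{1/2})_{ij} ] / t = M_{ij} / ( d_i^{1/2} + d_j^{1/2} ). -/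
open Matrix Filter

open Classical in
/-- The symmetric positive semidefinite square root of a real matrix, extended by `0`
to matrices that are not positive semidefinite. -/
noncomputable def msqrt {K : ℕ} (A : Matrix (Fin K) (Fin K) ℝ) : Matrix (Fin K) (Fin K) ℝ :=
  if h : A.PosSemidef then
    (h.1.eigenvectorUnitary : Matrix (Fin K) (Fin K) ℝ) *
      diagonal (fun i => Real.sqrt (h.1.eigenvalues i)) *
      (star h.1.eigenvectorUnitary : Matrix (Fin K) (Fin K) ℝ)
  else 0

open scoped MatrixOrder in
lemma msqrt_eq_sqrt {K : ℕ} {A : Matrix (Fin K) (Fin K) ℝ} (hA : A.PosSemidef) :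
    msqrt A = CFC.sqrt A := by
  rw [CFC.sqrt_eq_cfc, cfc_nnreal_eq_real _ A hA.nonneg, hA.1.cfc_eq]
  unfold msqrt
  rw [dif_pos hA]
  simp only [IsHermitian.cfc, Unitary.conjStarAlgAut_apply]
  congr 2
  ext a b
  simp only [diagonal_apply, Function.comp_apply, RCLike.ofReal_real_eq_id, id_eq,
    Real.coe_sqrt, Real.coe_toNNReal', max_eq_left (hA.eigenvalues_nonneg _)]

lemma psd_diag_nonneg {K : ℕ} {P : Matrix (Fin K) (Fin K) ℝ} (hP : P.PosSemidef) (i : Fin K) :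
    0 ≤ P i i := by
  simpa [dotProduct, mulVec, Pi.single_apply] using hP.dotProduct_mulVec_nonneg (Pi.single i 1)

open scoped MatrixOrder in
lemma msqrt_diagonal {K : ℕ} {d : Fin K → ℝ} (hd : ∀ i, 0 ≤ d i) :
    msqrt (Matrix.diagonal d) = Matrix.diagonal fun i => Real.sqrt (d i) := by
  have hD : (Matrix.diagonal d).PosSemidef := .diagonal fun i => hd i
  have hD0 : (Matrix.diagonal fun i => Real.sqrt (d i)).PosSemidef :=
    .diagonal fun i => Real.sqrt_nonneg _
  have hsq : (Matrix.diagonal fun i => Real.sqrt (d i)) ^ 2 = Matrix.diagonal d := by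
    rw [pow_two, diagonal_mul_diagonal]
    exact congrArg _ (funext fun i => Real.mul_self_sqrt (hd i))
  rw [msqrt_eq_sqrt hD]
  exact CFC.sqrt_unique (by rw [← pow_two]; exact hsq) hD0.nonneg

open scoped MatrixOrder in
lemma key_bound {K : ℕ} {d : Fin K → ℝ} (hd : ∀ i, 0 < d i)
    {M : Matrix (Fin K) (Fin K) ℝ} {t b Q : ℝ}
    (hb : 0 < b) (hbd : ∀ a, b ≤ Real.sqrt (d a))
    (hQ : ∑ a, ∑ c, (M a c) ^ 2 ≤ Q)
    (hA : (Matrix.diagonal d + t • M).PosSemidef) (i j : Fin K) :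
    |msqrt (Matrix.diagonal d + t • M) i j - Matrix.diagonal (fun a => Real.sqrt (d a)) i j
        - t * M i j / (Real.sqrt (d i) + Real.sqrt (d j))|
      ≤ t ^ 2 * Q / (b ^ 2 * (Real.sqrt (d i) + Real.sqrt (d j))) := by
  have hQ0 : 0 ≤ Q := le_trans (by positivity) hQ
  set D0 : Matrix (Fin K) (Fin K) ℝ := Matrix.diagonal (fun a => Real.sqrt (d a)) with hD0def
  set S := CFC.sqrt (Matrix.diagonal d + t • M) with hSdef
  set E := S - D0 with hEdef
  have hmsq : msqrt (Matrix.diagonal d + t • M) = S := by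
    exact msqrt_eq_sqrt hA
  have hSpsd : S.PosSemidef := (CFC.sqrt_nonneg _).posSemidef
  have hEH : Eᴴ = E := hSpsd.1.sub (Matrix.isHermitian_diagonal _)
  have hsq : S * S = Matrix.diagonal d + t • M := CFC.sqrt_mul_sqrt_self _ hA.nonneg
  have hD0sq : D0 * D0 = Matrix.diagonal d := by
    rw [hD0def, Matrix.diagonal_mul_diagonal]
    exact congrArg _ (funext fun a => Real.mul_self_sqrt (hd a).le)
  clear_value S D0 E
  have hEsym : ∀ a c, E c a = E a c := by
    intro a c
    conv_lhs => rw [← hEH]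
    simp [Matrix.conjTranspose_apply]
  have hSyl : S * E + E * D0 = t • M := by
    have h1 : S * E + E * D0 = S * S - D0 * D0 := by rw [hEdef]; noncomm_ring
    rw [h1, hsq, hD0sq, add_sub_cancel_left]
  have hD0ac : ∀ a c : Fin K, D0 a c = if a = c then Real.sqrt (d a) else 0 := by
    intro a c
    rw [hD0def, Matrix.diagonal_apply]
  have hentry : ∀ a c, (E * E) a c + Real.sqrt (d a) * E a c + E a c * Real.sqrt (d c)
      = t * M a c := by
    intro a c
    have h := congrFun (congrFun hSyl a) c
    have hS' : S = E + D0 := by rw [hEdef]; abel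
    rw [hS'] at h
    simpa [hD0def, Matrix.add_apply, Matrix.add_mul, Matrix.mul_diagonal, Matrix.diagonal_mul,
      Matrix.smul_apply, smul_eq_mul, add_assoc] using h
  set r := ∑ a, ∑ c, (E a c) ^ 2 with hrdef
  set T := ∑ a, ∑ c, E a c * M c a with hTdef
  clear_value r T
  have hr0 : 0 ≤ r := by
    rw [hrdef]; positivity
  -- trace identities
  have htr1 : (E * (S * E + E * D0)).trace = t * T := by
    rw [hSyl]
    have h1 : ∀ a, (E * (t • M)) a a = t * ∑ c, E a c * M c a := by
      intro a
      rw [Matrix.mul_apply, Finset.mul_sum]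
      refine Finset.sum_congr rfl fun c _ => ?_
      simp [Matrix.smul_apply]
      ring
    rw [Matrix.trace, hTdef, Finset.mul_sum]
    exact Finset.sum_congr rfl fun a _ => h1 a
  have htr2 : (E * (S * E + E * D0)).trace
      = (E * S * E).trace + ∑ a, Real.sqrt (d a) * ∑ c, (E a c) ^ 2 := by
    rw [mul_add, Matrix.trace_add, ← mul_assoc]
    congr 1
    have h1 : ∀ a, (E * (E * D0)) a a = Real.sqrt (d a) * ∑ c, (E a c) ^ 2 := by
      intro a
      rw [← mul_assoc, Matrix.mul_apply]
      have h2 : ∀ c, (E * E) a c * D0 c a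
          = if c = a then Real.sqrt (d a) * ∑ k, (E a k) ^ 2 else 0 := by
        intro c
        rcases eq_or_ne c a with rfl | hc
        · have hEc : (E * E) c c = ∑ k, (E c k) ^ 2 := by
            rw [Matrix.mul_apply]
            refine Finset.sum_congr rfl fun k _ => ?_
            rw [hEsym c k]; ring
          rw [if_pos rfl, hEc, hD0ac, if_pos rfl, mul_comm]
        · simp [hD0ac, hc]
      rw [Finset.sum_congr rfl fun c _ => h2 c]
      simp
    exact Finset.sum_congr rfl fun a _ => h1 a
  have htr3 : 0 ≤ (E * S * E).trace := by
    have hpsd : (Eᴴ * S * E).PosSemidef := hSpsd.conjTranspose_mul_mul_same E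
    rw [hEH] at hpsd
    exact Finset.sum_nonneg fun a _ => psd_diag_nonneg hpsd a
  have hbr : b * r ≤ t * T := by
    rw [← htr1, htr2]
    have h2 : b * r ≤ ∑ a, Real.sqrt (d a) * ∑ c, (E a c) ^ 2 := by
      rw [hrdef, Finset.mul_sum]
      refine Finset.sum_le_sum fun a _ => ?_
      exact mul_le_mul_of_nonneg_right (hbd a) (by positivity)
    linarith
  -- Cauchy-Schwarz
  have hCS : T ^ 2 ≤ r * Q := by
    have h2 := Finset.sum_mul_sq_le_sq_mul_sq Finset.univ
      (fun p : Fin K × Fin K => E p.1 p.2) (fun p : Fin K × Fin K => M p.2 p.1)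
    have h1 : T = ∑ p : Fin K × Fin K, E p.1 p.2 * M p.2 p.1 := by
      rw [hTdef, Fintype.sum_prod_type]
    have h3 : ∑ p : Fin K × Fin K, (E p.1 p.2) ^ 2 = r := by
      rw [hrdef, Fintype.sum_prod_type]
    have h4 : ∑ p : Fin K × Fin K, (M p.2 p.1) ^ 2 ≤ Q := by
      refine le_trans (le_of_eq ?_) hQ
      rw [Fintype.sum_prod_type, Finset.sum_comm]
    calc T ^ 2 = (∑ p : Fin K × Fin K, E p.1 p.2 * M p.2 p.1) ^ 2 := by rw [h1]
    _ ≤ (∑ p : Fin K × Fin K, (E p.1 p.2) ^ 2) * ∑ p : Fin K × Fin K, (M p.2 p.1) ^ 2 := h2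
    _ ≤ r * Q := by
        rw [h3]
        exact mul_le_mul_of_nonneg_left h4 hr0
  have hrQ : b ^ 2 * r ≤ t ^ 2 * Q := by
    rcases hr0.eq_or_lt with h | h
    · rw [← h, mul_zero]; positivity
    · have h5 : (b * r) ^ 2 ≤ (t * T) ^ 2 := by
        have := mul_self_le_mul_self (by positivity) hbr
        simpa [pow_two] using this
      have h6 : (t * T) ^ 2 ≤ t ^ 2 * (r * Q) := by
        rw [mul_pow]
        exact mul_le_mul_of_nonneg_left hCS (sq_nonneg t)
      have h7 : b ^ 2 * r * r ≤ t ^ 2 * Q * r := by nlinarith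
      exact le_of_mul_le_mul_right h7 h
  -- entrywise bound on E * E
  have hEE : |(E * E) i j| ≤ r := by
    have h1 : ((E * E) i j) ^ 2 ≤ r ^ 2 := by
      have hrow : ∑ k, (E i k) ^ 2 ≤ r := by
        rw [hrdef]
        exact Finset.single_le_sum (f := fun a => ∑ c, (E a c) ^ 2)
          (fun a _ => by positivity) (Finset.mem_univ i)
      have hcol : ∑ k, (E k j) ^ 2 ≤ r := by
        rw [hrdef]
        refine Finset.sum_le_sum fun a _ => ?_
        exact Finset.single_le_sum (f := fun c => (E a c) ^ 2)
          (fun c _ => sq_nonneg _) (Finset.mem_univ j)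
      have hcs := Finset.sum_mul_sq_le_sq_mul_sq Finset.univ
        (fun k => E i k) (fun k => E k j)
      rw [Matrix.mul_apply]
      calc (∑ k, E i k * E k j) ^ 2 ≤ (∑ k, (E i k) ^ 2) * ∑ k, (E k j) ^ 2 := hcs
      _ ≤ r ^ 2 := by
          rw [pow_two]
          exact mul_le_mul hrow hcol (by positivity) hr0
    calc |(E * E) i j| = Real.sqrt (((E * E) i j) ^ 2) := (Real.sqrt_sq_eq_abs _).symm
    _ ≤ Real.sqrt (r ^ 2) := Real.sqrt_le_sqrt h1
    _ = r := Real.sqrt_sq hr0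
  -- conclude
  have hs : 0 < Real.sqrt (d i) + Real.sqrt (d j) := by
    have := Real.sqrt_pos.mpr (hd i)
    have := Real.sqrt_nonneg (d j)
    linarith
  set s := Real.sqrt (d i) + Real.sqrt (d j) with hsdef
  have hij := hentry i j
  have hEij : msqrt (Matrix.diagonal d + t • M) i j - D0 i j = E i j := by
    rw [hmsq, hEdef, Matrix.sub_apply]
  rw [hEij]
  have hvalue : E i j - t * M i j / s = -(E * E) i j / s := by
    field_simp
    rw [hsdef]
    linarith [hij]
  rw [hvalue]
  rw [abs_div, abs_neg, abs_of_pos hs]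
  rw [div_le_div_iff₀ hs (by positivity)]
  have h8 : |(E * E) i j| * (b ^ 2 * s) ≤ r * (b ^ 2 * s) :=
    mul_le_mul_of_nonneg_right hEE (by positivity)
  have h9 : (b ^ 2 * r) * s ≤ (t ^ 2 * Q) * s := mul_le_mul_of_nonneg_right hrQ hs.le
  nlinarith [h8, h9]

/-- derivative of the matrix square root at a positive diagonal matrix:
for `D = diag(d₁,…,d_K)` with positive entries and `M` symmetric, `D + t M` is positive
definite for all small `|t|`, and entrywise
`lim_{t→0} [((D + t M)^{1/2})_{ij} − (D^{1/2})_{ij}]/t = M_{ij}/(√dᵢ + √dⱼ)`. -/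
theorem stmt8 (K : ℕ) (hK : 0 < K)
    (d : Fin K → ℝ) (hd : ∀ i, 0 < d i)
    (M : Matrix (Fin K) (Fin K) ℝ) (hM : M.IsHermitian) :
    ∃ t₀ : ℝ, 0 < t₀ ∧
      (∀ t : ℝ, |t| < t₀ → (Matrix.diagonal d + t • M).PosDef) ∧
      (∀ i j : Fin K,
        Tendsto
          (fun t : ℝ =>
            ((msqrt (Matrix.diagonal d + t • M)) i j - (msqrt (Matrix.diagonal d)) i j) / t)
          (nhdsWithin 0 {(0 : ℝ)}ᶜ)
          (nhds (M i j / (Real.sqrt (d i) + Real.sqrt (d j))))) := by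
  have hne : (Finset.univ : Finset (Fin K)).Nonempty := ⟨⟨0, hK⟩, Finset.mem_univ _⟩
  set c0 := Finset.univ.inf' hne d with hc0def
  have hc0 : 0 < c0 := (Finset.lt_inf'_iff hne).mpr fun a _ => hd a
  set CM := ∑ a, ∑ c, |M a c| with hCMdef
  have hCM0 : 0 ≤ CM := by positivity
  set t₀ := c0 / (CM + 1) with ht₀def
  have ht₀ : 0 < t₀ := div_pos hc0 (by linarith)
  have hPD : ∀ t : ℝ, |t| < t₀ → (Matrix.diagonal d + t • M).PosDef := by
    intro t ht
    have htCM : |t| * CM < c0 := by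
      have h1 : |t| * (CM + 1) < t₀ * (CM + 1) :=
        mul_lt_mul_of_pos_right ht (by linarith)
      rw [ht₀def, div_mul_cancel₀ _ (by linarith : CM + 1 ≠ 0)] at h1
      nlinarith [abs_nonneg t]
    refine Matrix.PosDef.of_dotProduct_mulVec_pos ?_ ?_
    · refine (Matrix.isHermitian_diagonal _).add ?_
      show (t • M)ᴴ = t • M
      rw [Matrix.conjTranspose_smul, star_trivial, hM.eq]
    · intro x hx
      set S := ∑ a, (x a) ^ 2 with hSdef
      have hS : 0 < S := by
        obtain ⟨a, ha⟩ := Function.ne_iff.mp hx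
        refine Finset.sum_pos' (fun c _ => sq_nonneg _) ⟨a, Finset.mem_univ a, pow_pos (abs_pos.mpr ha) 2 |>.trans_eq (sq_abs _)⟩
      have hxsq : ∀ a, (x a) ^ 2 ≤ S := fun a =>
        Finset.single_le_sum (fun c _ => sq_nonneg (x c)) (Finset.mem_univ a)
      have hmul : ∀ a c, |x a * x c| ≤ S := by
        intro a c
        rw [abs_mul]
        nlinarith [hxsq a, hxsq c, sq_abs (x a), sq_abs (x c), sq_nonneg (|x a| - |x c|),
          abs_nonneg (x a), abs_nonneg (x c)]
      have hdot : star x ⬝ᵥ ((Matrix.diagonal d + t • M) *ᵥ x)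
          = (∑ a, d a * (x a) ^ 2) + t * ∑ a, ∑ c, x a * (M a c * x c) := by
        rw [star_trivial, Matrix.add_mulVec, dotProduct_add, Matrix.smul_mulVec,
          dotProduct_smul, smul_eq_mul]
        congr 1
        · simp only [dotProduct, Matrix.mulVec_diagonal]
          exact Finset.sum_congr rfl fun a _ => by ring
        · congr 1
          simp only [dotProduct, Matrix.mulVec, Finset.mul_sum]
      have h1 : c0 * S ≤ ∑ a, d a * (x a) ^ 2 := by
        rw [hSdef, Finset.mul_sum]
        refine Finset.sum_le_sum fun a _ => ?_
        exact mul_le_mul_of_nonneg_right (Finset.inf'_le d (Finset.mem_univ a)) (sq_nonneg _)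
      have h2 : |∑ a, ∑ c, x a * (M a c * x c)| ≤ CM * S := by
        calc |∑ a, ∑ c, x a * (M a c * x c)| ≤ ∑ a, |∑ c, x a * (M a c * x c)| :=
              Finset.abs_sum_le_sum_abs _ _
        _ ≤ ∑ a, ∑ c, |x a * (M a c * x c)| :=
              Finset.sum_le_sum fun a _ => Finset.abs_sum_le_sum_abs _ _
        _ ≤ ∑ a, ∑ c, |M a c| * S := by
              refine Finset.sum_le_sum fun a _ => Finset.sum_le_sum fun c _ => ?_
              have : |x a * (M a c * x c)| = |M a c| * |x a * x c| := by
                rw [← abs_mul]; congr 1; ring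
              rw [this]
              exact mul_le_mul_of_nonneg_left (hmul a c) (abs_nonneg _)
        _ = CM * S := by
              rw [hCMdef, Finset.sum_mul]
              exact Finset.sum_congr rfl fun a _ => (Finset.sum_mul _ _ _).symm
      rw [hdot]
      have h3 : -(|t| * (CM * S)) ≤ t * ∑ a, ∑ c, x a * (M a c * x c) := by
        have := neg_abs_le (t * ∑ a, ∑ c, x a * (M a c * x c))
        have h4 : |t * ∑ a, ∑ c, x a * (M a c * x c)| ≤ |t| * (CM * S) := by
          rw [abs_mul]
          exact mul_le_mul_of_nonneg_left h2 (abs_nonneg t)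
        linarith
      nlinarith [htCM, hS, h1, h3]
  refine ⟨t₀, ht₀, hPD, ?_⟩
  intro i j
  set b := Finset.univ.inf' hne (fun a => Real.sqrt (d a)) with hbdef
  have hb : 0 < b := (Finset.lt_inf'_iff hne).mpr fun a _ => Real.sqrt_pos.mpr (hd a)
  have hbd : ∀ a, b ≤ Real.sqrt (d a) := fun a => Finset.inf'_le _ (Finset.mem_univ a)
  set Q := ∑ a, ∑ c, (M a c) ^ 2 with hQdef
  have hQ0 : 0 ≤ Q := by rw [hQdef]; positivity
  set s := Real.sqrt (d i) + Real.sqrt (d j) with hsdef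
  have hs : 0 < s := by
    have h1 := Real.sqrt_pos.mpr (hd i)
    have h2 := Real.sqrt_nonneg (d j)
    rw [hsdef]; linarith
  clear_value b Q s
  have hmsqd : msqrt (Matrix.diagonal d) = Matrix.diagonal (fun a => Real.sqrt (d a)) :=
    msqrt_diagonal fun a => (hd a).le
  rw [← tendsto_sub_nhds_zero_iff]
  have hev : ∀ᶠ t in nhdsWithin (0:ℝ) {(0:ℝ)}ᶜ, |t| < t₀ ∧ t ≠ 0 := by
    have h1 : ∀ᶠ t in nhds (0:ℝ), |t| < t₀ := by
      have := Metric.ball_mem_nhds (0:ℝ) ht₀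
      filter_upwards [this] with t ht
      simpa [Real.dist_eq] using ht
    exact (h1.filter_mono nhdsWithin_le_nhds).and
      (eventually_mem_nhdsWithin.mono fun t ht => ht)
  apply squeeze_zero_norm' (a := fun t => |t| * (Q / (b ^ 2 * s)))
  · filter_upwards [hev] with t ⟨ht, ht0⟩
    have hA := (hPD t ht).posSemidef
    have hk := key_bound hd hb hbd (le_of_eq hQdef.symm) hA i j
    rw [← hsdef] at hk
    have ht0' : |t| ≠ 0 := abs_ne_zero.mpr ht0
    have heq : (msqrt (Matrix.diagonal d + t • M) i j - msqrt (Matrix.diagonal d) i j) / t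
          - M i j / s
        = (msqrt (Matrix.diagonal d + t • M) i j
            - Matrix.diagonal (fun a => Real.sqrt (d a)) i j - t * M i j / s) / t := by
      rw [hmsqd]
      field_simp
    rw [Real.norm_eq_abs, heq, abs_div]
    calc |msqrt (Matrix.diagonal d + t • M) i j
          - Matrix.diagonal (fun a => Real.sqrt (d a)) i j - t * M i j / s| / |t|
        ≤ (t ^ 2 * Q / (b ^ 2 * s)) / |t| := by gcongr
    _ = |t| * (Q / (b ^ 2 * s)) := by
        have hbs : b ^ 2 * s ≠ 0 := by positivity
        field_simp
        linear_combination (-Q) * abs_mul_abs_self t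
  · have : Tendsto (fun t : ℝ => |t| * (Q / (b ^ 2 * s))) (nhds 0) (nhds 0) := by
      have h1 : Tendsto (fun t : ℝ => |t| * (Q / (b ^ 2 * s))) (nhds 0)
          (nhds (|0| * (Q / (b ^ 2 * s)))) :=
        ((continuous_abs.mul continuous_const).tendsto 0)
      simpa only [abs_zero, zero_mul] using h1
    exact this.mono_left nhdsWithin_le_nhds
end

section
/- Let K be a positive integer, let D = diag(d₁,…,d_K) with d₁ ≥ ⋯ ≥ d_K ≥ 0, and let A ∈ ℝ^{K×K} be symmetric positive definite with condition number κ = λ_max(A)/λ_min(A), where λ_max(A) and λ_min(A) are its largest and smallest eigenvalues. Let U ∈ ℝ^{K×K} be an orthogonal matrix whose s-th column is an eigenvector of D A D associated with Λ_s(D A D) for every s ∈ {1,…,K} (columns ordered so that the associated eigenvalues are non-increasing). Then for all r, s ∈ {1,…,K} with d_{min(r,s)} > 0, |U_{rs}| ≤ κ · d_{max(r,s)} / d_{min(r,s)}, where d_{max(r,s)} and d_{min(r,s)} denote the diagonal entries of D at indices max(r,s) and min(r,s). -/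
open Matrix BigOperators

section Aux

open Module

variable {K : ℕ}

private lemma stmt9.spectral {A : Matrix (Fin K) (Fin K) ℝ} (hA : A.IsHermitian) :
    ∃ V : Matrix (Fin K) (Fin K) ℝ, Vᵀ * V = 1 ∧ V * Vᵀ = 1 ∧
      A = V * diagonal hA.eigenvalues * Vᵀ := by
  refine ⟨hA.eigenvectorUnitary, ?_, ?_, ?_⟩
  · have := (hA.eigenvectorUnitary).2
    rw [Matrix.mem_unitaryGroup_iff'] at this
    simpa [star_eq_conjTranspose] using this
  · have := (hA.eigenvectorUnitary).2
    rw [Matrix.mem_unitaryGroup_iff] at this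
    simpa [star_eq_conjTranspose] using this
  · have := hA.spectral_theorem
    simpa [star_eq_conjTranspose] using this

private lemma stmt9.quadform (V : Matrix (Fin K) (Fin K) ℝ) (B : Matrix (Fin K) (Fin K) ℝ)
    (μ : Fin K → ℝ) (hB : B = V * diagonal μ * Vᵀ) (w : Fin K → ℝ) :
    w ⬝ᵥ B *ᵥ w = ∑ i, μ i * ((Vᵀ *ᵥ w) i)^2 := by
  subst hB
  rw [← mulVec_mulVec, ← mulVec_mulVec, dotProduct_mulVec, ← transpose_transpose V,
    vecMul_transpose, transpose_transpose]
  simp [dotProduct, mulVec_diagonal, mul_comm, sq, mul_assoc, mul_left_comm]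

private lemma stmt9.normsq (V : Matrix (Fin K) (Fin K) ℝ) (hV : V * Vᵀ = 1) (w : Fin K → ℝ) :
    w ⬝ᵥ w = ∑ i, ((Vᵀ *ᵥ w) i)^2 := by
  have h := stmt9.quadform V 1 (fun _ => 1) (by simp [hV]) w
  simpa using h

private lemma stmt9.inter_ne_zero (W₁ W₂ : Submodule ℝ (Fin K → ℝ))
    (h : K < finrank ℝ W₁ + finrank ℝ W₂) :
    ∃ x : Fin K → ℝ, x ≠ 0 ∧ x ∈ W₁ ∧ x ∈ W₂ := by
  have hsum := Submodule.finrank_sup_add_finrank_inf_eq W₁ W₂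
  have hsup : finrank ℝ ↥(W₁ ⊔ W₂) ≤ K := by
    simpa using Submodule.finrank_le (W₁ ⊔ W₂)
  have hpos : 0 < finrank ℝ ↥(W₁ ⊓ W₂) := by omega
  have hne : (W₁ ⊓ W₂) ≠ ⊥ := by
    intro hb; rw [hb] at hpos; simp at hpos
  obtain ⟨x, hx, hx0⟩ := Submodule.exists_mem_ne_zero_of_ne_bot hne
  exact ⟨x, hx0, hx.1, hx.2⟩

private lemma stmt9.li_single (F : Finset (Fin K)) :
    LinearIndependent ℝ (fun i : ↥F => (Pi.single (i : Fin K) 1 : Fin K → ℝ)) := by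
  have h : LinearIndependent ℝ (fun i : Fin K => (Pi.single i 1 : Fin K → ℝ)) := by
    have := (Pi.basisFun ℝ (Fin K)).linearIndependent
    convert this using 1
    funext i
    simp [Pi.basisFun_apply]
  exact h.comp Subtype.val Subtype.val_injective

private lemma stmt9.finrank_span_single (F : Finset (Fin K)) :
    finrank ℝ (Submodule.span ℝ
      (Set.range fun i : ↥F => (Pi.single (i : Fin K) 1 : Fin K → ℝ))) = F.card := by
  rw [finrank_span_eq_card (stmt9.li_single F), Fintype.card_coe]

private lemma stmt9.mem_span_single (F : Finset (Fin K)) (x : Fin K → ℝ)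
    (hx : x ∈ Submodule.span ℝ (Set.range fun i : ↥F => (Pi.single (i : Fin K) 1 : Fin K → ℝ)))
    (j : Fin K) (hj : j ∉ F) : x j = 0 := by
  induction hx using Submodule.span_induction with
  | mem y hy =>
      obtain ⟨i, rfl⟩ := hy
      refine Pi.single_eq_of_ne (fun h : j = (i : Fin K) => hj ?_) 1
      rw [h]; exact i.2
  | zero => rfl
  | add y z _ _ hy hz => simp [hy, hz]
  | smul a y _ hy => simp [hy]

private lemma stmt9.mulVec_inj (U : Matrix (Fin K) (Fin K) ℝ) (hU : Uᵀ * U = 1)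
    {c : Fin K → ℝ} (hc : U *ᵥ c = 0) : c = 0 := by
  have : Uᵀ *ᵥ (U *ᵥ c) = 0 := by rw [hc, mulVec_zero]
  rwa [mulVec_mulVec, hU, one_mulVec] at this

private lemma stmt9.finrank_span_U (U : Matrix (Fin K) (Fin K) ℝ) (hU : Uᵀ * U = 1)
    (F : Finset (Fin K)) :
    finrank ℝ (Submodule.span ℝ
      (Set.range fun i : ↥F => U *ᵥ (Pi.single (i : Fin K) 1 : Fin K → ℝ))) = F.card := by
  have hker : LinearMap.ker U.mulVecLin = ⊥ := by
    rw [LinearMap.ker_eq_bot']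
    intro c hc
    exact stmt9.mulVec_inj U hU hc
  have hli := (stmt9.li_single F).map' U.mulVecLin hker
  have hli' : LinearIndependent ℝ
      (fun i : ↥F => U *ᵥ (Pi.single (i : Fin K) 1 : Fin K → ℝ)) := hli
  rw [finrank_span_eq_card hli', Fintype.card_coe]

private lemma stmt9.mem_span_U (U : Matrix (Fin K) (Fin K) ℝ) (F : Finset (Fin K)) (x : Fin K → ℝ)
    (hx : x ∈ Submodule.span ℝ
      (Set.range fun i : ↥F => U *ᵥ (Pi.single (i : Fin K) 1 : Fin K → ℝ))) :
    ∃ c : Fin K → ℝ, c ∈ Submodule.span ℝ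
      (Set.range fun i : ↥F => (Pi.single (i : Fin K) 1 : Fin K → ℝ)) ∧ x = U *ᵥ c := by
  have h : (Set.range fun i : ↥F => U *ᵥ (Pi.single (i : Fin K) 1 : Fin K → ℝ))
      = U.mulVecLin '' (Set.range fun i : ↥F => (Pi.single (i : Fin K) 1 : Fin K → ℝ)) := by
    rw [← Set.range_comp]; rfl
  rw [h, ← Submodule.map_span] at hx
  obtain ⟨c, hc, rfl⟩ := hx
  exact ⟨c, hc, rfl⟩

private lemma stmt9.dot_U_U (U : Matrix (Fin K) (Fin K) ℝ) (hU : Uᵀ * U = 1)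
    (c z : Fin K → ℝ) : (U *ᵥ c) ⬝ᵥ (U *ᵥ z) = c ⬝ᵥ z := by
  rw [dotProduct_mulVec]
  congr 1
  rw [← transpose_transpose U, vecMul_transpose, transpose_transpose, mulVec_mulVec, hU,
    one_mulVec]

private lemma stmt9.dot_diag_sum (Λ c : Fin K → ℝ) :
    c ⬝ᵥ (diagonal Λ *ᵥ c) = ∑ i, Λ i * (c i)^2 := by
  simp only [dotProduct, mulVec_diagonal, sq]
  exact Finset.sum_congr rfl fun i _ => by ring

/-- the antitone property of `eigsDesc`. -/
private lemma stmt9.eigsDesc_antitone {A : Matrix (Fin K) (Fin K) ℝ} (hA : A.IsHermitian) :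
    Antitone (eigsDesc hA) := by
  intro a b hab
  exact Tuple.monotone_sort hA.eigenvalues (Fin.rev_le_rev.mpr hab)

private lemma stmt9.eigsDesc_bounds {A : Matrix (Fin K) (Fin K) ℝ} (hA : A.IsHermitian)
    (hK : 0 < K) (i : Fin K) :
    eigsDesc hA ⟨K - 1, Nat.sub_lt hK one_pos⟩ ≤ hA.eigenvalues i ∧
      hA.eigenvalues i ≤ eigsDesc hA ⟨0, hK⟩ := by
  set σ := Tuple.sort hA.eigenvalues with hσ
  have hmono : Monotone (hA.eigenvalues ∘ σ) := Tuple.monotone_sort hA.eigenvalues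
  have hi : hA.eigenvalues i = (hA.eigenvalues ∘ σ) (σ.symm i) := by
    simp [Function.comp, Equiv.apply_symm_apply]
  constructor
  · have h0 : (⟨K - 1, Nat.sub_lt hK one_pos⟩ : Fin K).rev ≤ σ.symm i := by
      rw [Fin.le_def, Fin.val_rev]
      simp only []
      omega
    rw [hi]
    exact hmono h0
  · have h1 : σ.symm i ≤ (⟨0, hK⟩ : Fin K).rev := by
      rw [Fin.le_def, Fin.val_rev]
      simp only []
      have := (σ.symm i).isLt
      omega
    rw [hi]
    exact hmono h1

end Aux

set_option maxHeartbeats 2000000 in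
/-- for `D = diag(d₁,…,d_K)` with `d₁ ≥ ⋯ ≥ d_K ≥ 0`, `A` symmetric
positive definite with condition number `κ = λ_max(A)/λ_min(A)`, and `U` an orthogonal
matrix of eigenvectors of `D A D` (columns ordered by non-increasing eigenvalue), one
has `|U_{rs}| ≤ κ · d_{max(r,s)}/d_{min(r,s)}` whenever `d_{min(r,s)} > 0`. -/
theorem stmt9 (K : ℕ) (hK : 0 < K)
    (d : Fin K → ℝ) (hd : Antitone d) (hd0 : ∀ i, 0 ≤ d i)
    (A : Matrix (Fin K) (Fin K) ℝ) (hA : A.PosDef)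
    (κ : ℝ)
    (hκ : κ = eigsDesc hA.1 ⟨0, hK⟩ / eigsDesc hA.1 ⟨K - 1, Nat.sub_lt hK one_pos⟩)
    (U : Matrix (Fin K) (Fin K) ℝ) (hU : Uᵀ * U = 1)
    (hDAD : (Matrix.diagonal d * A * Matrix.diagonal d).IsHermitian)
    (hUeig : ∀ s : Fin K,
      (Matrix.diagonal d * A * Matrix.diagonal d).mulVec (fun i => U i s)
        = eigsDesc hDAD s • (fun i => U i s)) :
    ∀ r s : Fin K, 0 < d (min r s) → |U r s| ≤ κ * d (max r s) / d (min r s) := by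
  classical
  set M : Matrix (Fin K) (Fin K) ℝ := Matrix.diagonal d * A * Matrix.diagonal d with hM
  set Λ : Fin K → ℝ := eigsDesc hDAD with hΛdef
  set μ : Fin K → ℝ := hA.1.eigenvalues with hμdef
  set lmax : ℝ := eigsDesc hA.1 ⟨0, hK⟩ with hlmaxdef
  set lmin : ℝ := eigsDesc hA.1 ⟨K - 1, Nat.sub_lt hK one_pos⟩ with hlmindef
  obtain ⟨V, hV1, hV2, hspec⟩ := stmt9.spectral hA.1
  rw [← hμdef] at hspec
  have hμpos : ∀ i, 0 < μ i := fun i => hA.eigenvalues_pos i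
  have hbounds : ∀ i, lmin ≤ μ i ∧ μ i ≤ lmax := fun i => stmt9.eigsDesc_bounds hA.1 hK i
  have hlminpos : 0 < lmin := by
    rw [hlmindef]
    exact hμpos _
  have hlminmax : lmin ≤ lmax := le_trans (hbounds ⟨0, hK⟩).1 (hbounds ⟨0, hK⟩).2
  have hκ1 : 1 ≤ κ := by
    rw [hκ]
    exact (one_le_div hlminpos).mpr hlminmax
  have hκpos : 0 < κ := lt_of_lt_of_le one_pos hκ1
  have hκlmin : κ * lmin = lmax := by
    rw [hκ, div_mul_cancel₀ _ hlminpos.ne']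
  have hΛanti : Antitone Λ := stmt9.eigsDesc_antitone hDAD
  clear_value M Λ μ lmax lmin
  -- M * U = U * diagonal Λ
  have hMU : M * U = U * diagonal Λ := by
    ext i j
    have h := congrFun (hUeig j) i
    simp only [mulVec, dotProduct, Pi.smul_apply, smul_eq_mul] at h
    rw [Matrix.mul_apply, Matrix.mul_diagonal]
    rw [← hM] at h
    rw [h]; ring
  -- Rayleigh bounds for M via spectral decomposition of A
  have hquadM : ∀ y : Fin K → ℝ,
      y ⬝ᵥ M *ᵥ y = (fun i => d i * y i) ⬝ᵥ A *ᵥ (fun i => d i * y i) := by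
    intro y
    have h1 : diagonal d *ᵥ y = fun i => d i * y i := by
      funext i; exact mulVec_diagonal d y i
    have h2 : y ᵥ* diagonal d = fun i => d i * y i := by
      funext i; rw [vecMul_diagonal]; ring
    rw [hM, ← mulVec_mulVec, ← mulVec_mulVec, h1, dotProduct_mulVec, h2]
  have hlow : ∀ y : Fin K → ℝ,
      lmin * ∑ i, (d i * y i)^2 ≤ y ⬝ᵥ M *ᵥ y := by
    intro y
    rw [hquadM y]
    set w : Fin K → ℝ := fun i => d i * y i with hw
    rw [stmt9.quadform V A μ hspec w]
    have hns : ∑ i, (w i)^2 = ∑ i, ((Vᵀ *ᵥ w) i)^2 := by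
      have := stmt9.normsq V hV2 w
      simpa [dotProduct, sq] using this
    rw [show (∑ i, (d i * y i)^2) = ∑ i, (w i)^2 from rfl, hns, Finset.mul_sum]
    apply Finset.sum_le_sum
    intro i _
    exact mul_le_mul_of_nonneg_right (hbounds i).1 (sq_nonneg _)
  have hhigh : ∀ y : Fin K → ℝ,
      y ⬝ᵥ M *ᵥ y ≤ lmax * ∑ i, (d i * y i)^2 := by
    intro y
    rw [hquadM y]
    set w : Fin K → ℝ := fun i => d i * y i with hw
    rw [stmt9.quadform V A μ hspec w]
    have hns : ∑ i, (w i)^2 = ∑ i, ((Vᵀ *ᵥ w) i)^2 := by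
      have := stmt9.normsq V hV2 w
      simpa [dotProduct, sq] using this
    rw [show (∑ i, (d i * y i)^2) = ∑ i, (w i)^2 from rfl, hns, Finset.mul_sum]
    apply Finset.sum_le_sum
    intro i _
    exact mul_le_mul_of_nonneg_right (hbounds i).2 (sq_nonneg _)
  -- identities for x = U *ᵥ c
  have hMc : ∀ c : Fin K → ℝ, (U *ᵥ c) ⬝ᵥ M *ᵥ (U *ᵥ c) = ∑ i, Λ i * (c i)^2 := by
    intro c
    rw [mulVec_mulVec, hMU, ← mulVec_mulVec, stmt9.dot_U_U U hU, stmt9.dot_diag_sum]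
  have hcc : ∀ c : Fin K → ℝ, (U *ᵥ c) ⬝ᵥ (U *ᵥ c) = ∑ i, (c i)^2 := by
    intro c
    rw [stmt9.dot_U_U U hU]
    simp [dotProduct, sq]
  -- Ostrowski-type bounds
  have ost_low : ∀ t : Fin K, lmin * (d t)^2 ≤ Λ t := by
    intro t
    obtain ⟨x, hx0, hx1, hx2⟩ := stmt9.inter_ne_zero
      (Submodule.span ℝ (Set.range fun i : ↥(Finset.Iic t) =>
        (Pi.single (i : Fin K) 1 : Fin K → ℝ)))
      (Submodule.span ℝ (Set.range fun i : ↥(Finset.Ici t) =>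
        U *ᵥ (Pi.single (i : Fin K) 1 : Fin K → ℝ)))
      (by
        rw [stmt9.finrank_span_single, stmt9.finrank_span_U U hU, Fin.card_Iic, Fin.card_Ici]
        have := t.isLt
        omega)
    obtain ⟨c, hc, rfl⟩ := stmt9.mem_span_U U _ x hx2
    have hxsupp : ∀ j : Fin K, t < j → (U *ᵥ c) j = 0 := fun j hj =>
      stmt9.mem_span_single _ _ hx1 j (by simpa [Finset.mem_Iic] using not_le.mpr hj)
    have hcsupp : ∀ j : Fin K, j < t → c j = 0 := fun j hj =>
      stmt9.mem_span_single _ _ hc j (by simpa [Finset.mem_Ici] using not_le.mpr hj)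
    have h1 : ∑ i, Λ i * (c i)^2 ≤ Λ t * ∑ i, (c i)^2 := by
      rw [Finset.mul_sum]
      apply Finset.sum_le_sum
      intro i _
      by_cases hci : c i = 0
      · simp [hci]
      · have hti : t ≤ i := not_lt.mp (fun h => hci (hcsupp i h))
        exact mul_le_mul_of_nonneg_right (hΛanti hti) (sq_nonneg _)
    have h2 : (d t)^2 * ∑ i, ((U *ᵥ c) i)^2 ≤ ∑ i, (d i * (U *ᵥ c) i)^2 := by
      rw [Finset.mul_sum]
      apply Finset.sum_le_sum
      intro i _
      by_cases hxi : (U *ᵥ c) i = 0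
      · simp [hxi]
      · have hit : i ≤ t := not_lt.mp (fun h => hxi (hxsupp i h))
        have hdi : d t ≤ d i := hd hit
        rw [mul_pow]
        exact mul_le_mul_of_nonneg_right (by nlinarith [hd0 t, hd0 i]) (sq_nonneg _)
    have h3 := hlow (U *ᵥ c)
    have hxxs : (U *ᵥ c) ⬝ᵥ (U *ᵥ c) = ∑ i, ((U *ᵥ c) i)^2 := by simp [dotProduct, sq]
    have hxpos : 0 < ∑ i, ((U *ᵥ c) i)^2 := by
      apply Finset.sum_pos'
      · intro i _; exact sq_nonneg _
      · have : ∃ i, (U *ᵥ c) i ≠ 0 := by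
          by_contra hcon
          push_neg at hcon
          exact hx0 (funext hcon)
        obtain ⟨i, hi⟩ := this
        exact ⟨i, Finset.mem_univ i, by positivity⟩
    have hsum_eq : ∑ i, ((U *ᵥ c) i)^2 = ∑ i, (c i)^2 := by
      rw [← hxxs, hcc]
    have hMx := hMc c
    have hchain : lmin * (d t)^2 * ∑ i, ((U *ᵥ c) i)^2 ≤ Λ t * ∑ i, ((U *ᵥ c) i)^2 := by
      calc lmin * (d t)^2 * ∑ i, ((U *ᵥ c) i)^2
          = lmin * ((d t)^2 * ∑ i, ((U *ᵥ c) i)^2) := by ring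
        _ ≤ lmin * ∑ i, (d i * (U *ᵥ c) i)^2 := by
            exact mul_le_mul_of_nonneg_left h2 hlminpos.le
        _ ≤ (U *ᵥ c) ⬝ᵥ M *ᵥ (U *ᵥ c) := h3
        _ = ∑ i, Λ i * (c i)^2 := hMx
        _ ≤ Λ t * ∑ i, (c i)^2 := h1
        _ = Λ t * ∑ i, ((U *ᵥ c) i)^2 := by rw [hsum_eq]
    exact le_of_mul_le_mul_right hchain hxpos
  have ost_high : ∀ t : Fin K, Λ t ≤ lmax * (d t)^2 := by
    intro t
    obtain ⟨x, hx0, hx1, hx2⟩ := stmt9.inter_ne_zero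
      (Submodule.span ℝ (Set.range fun i : ↥(Finset.Ici t) =>
        (Pi.single (i : Fin K) 1 : Fin K → ℝ)))
      (Submodule.span ℝ (Set.range fun i : ↥(Finset.Iic t) =>
        U *ᵥ (Pi.single (i : Fin K) 1 : Fin K → ℝ)))
      (by
        rw [stmt9.finrank_span_single, stmt9.finrank_span_U U hU, Fin.card_Iic, Fin.card_Ici]
        have := t.isLt
        omega)
    obtain ⟨c, hc, rfl⟩ := stmt9.mem_span_U U _ x hx2
    have hxsupp : ∀ j : Fin K, j < t → (U *ᵥ c) j = 0 := fun j hj =>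
      stmt9.mem_span_single _ _ hx1 j (by simpa [Finset.mem_Ici] using not_le.mpr hj)
    have hcsupp : ∀ j : Fin K, t < j → c j = 0 := fun j hj =>
      stmt9.mem_span_single _ _ hc j (by simpa [Finset.mem_Iic] using not_le.mpr hj)
    have h1 : Λ t * ∑ i, (c i)^2 ≤ ∑ i, Λ i * (c i)^2 := by
      rw [Finset.mul_sum]
      apply Finset.sum_le_sum
      intro i _
      by_cases hci : c i = 0
      · simp [hci]
      · have hit : i ≤ t := not_lt.mp (fun h => hci (hcsupp i h))
        exact mul_le_mul_of_nonneg_right (hΛanti hit) (sq_nonneg _)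
    have h2 : ∑ i, (d i * (U *ᵥ c) i)^2 ≤ (d t)^2 * ∑ i, ((U *ᵥ c) i)^2 := by
      rw [Finset.mul_sum]
      apply Finset.sum_le_sum
      intro i _
      by_cases hxi : (U *ᵥ c) i = 0
      · simp [hxi]
      · have hti : t ≤ i := not_lt.mp (fun h => hxi (hxsupp i h))
        have hdi : d i ≤ d t := hd hti
        rw [mul_pow]
        exact mul_le_mul_of_nonneg_right (by nlinarith [hd0 t, hd0 i]) (sq_nonneg _)
    have h3 := hhigh (U *ᵥ c)
    have hxpos : 0 < ∑ i, ((U *ᵥ c) i)^2 := by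
      apply Finset.sum_pos'
      · intro i _; exact sq_nonneg _
      · have : ∃ i, (U *ᵥ c) i ≠ 0 := by
          by_contra hcon
          push_neg at hcon
          exact hx0 (funext hcon)
        obtain ⟨i, hi⟩ := this
        exact ⟨i, Finset.mem_univ i, by positivity⟩
    have hsum_eq : ∑ i, ((U *ᵥ c) i)^2 = ∑ i, (c i)^2 := by
      have hxxs : (U *ᵥ c) ⬝ᵥ (U *ᵥ c) = ∑ i, ((U *ᵥ c) i)^2 := by simp [dotProduct, sq]
      rw [← hxxs, hcc]
    have hMx := hMc c
    have hlmax0 : 0 ≤ lmax := le_trans hlminpos.le hlminmax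
    have hchain : Λ t * ∑ i, ((U *ᵥ c) i)^2 ≤ lmax * (d t)^2 * ∑ i, ((U *ᵥ c) i)^2 := by
      calc Λ t * ∑ i, ((U *ᵥ c) i)^2
          = Λ t * ∑ i, (c i)^2 := by rw [hsum_eq]
        _ ≤ ∑ i, Λ i * (c i)^2 := h1
        _ = (U *ᵥ c) ⬝ᵥ M *ᵥ (U *ᵥ c) := hMx.symm
        _ ≤ lmax * ∑ i, (d i * (U *ᵥ c) i)^2 := h3
        _ ≤ lmax * ((d t)^2 * ∑ i, ((U *ᵥ c) i)^2) := mul_le_mul_of_nonneg_left h2 hlmax0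
        _ = lmax * (d t)^2 * ∑ i, ((U *ᵥ c) i)^2 := by ring
    exact le_of_mul_le_mul_right hchain hxpos
  -- now the main claim
  intro r s hmin
  rcases le_total r s with hrs | hsr
  · -- r ≤ s : min = r, max = s
    rw [min_eq_left hrs] at hmin ⊢
    rw [max_eq_right hrs]
    set u : Fin K → ℝ := fun i => U i s with hu
    have huu : u ⬝ᵥ u = 1 := by
      have h := congrFun (congrFun hU s) s
      simpa [Matrix.mul_apply, Matrix.one_apply, dotProduct, transpose_apply,
        mul_comm] using h
    have hq : u ⬝ᵥ M *ᵥ u = Λ s := by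
      rw [← hM] at hUeig
      rw [hUeig s]
      simp only [dotProduct, Pi.smul_apply, smul_eq_mul]
      rw [show ∑ i, u i * (Λ s * u i) = Λ s * (u ⬝ᵥ u) by
        simp [dotProduct]; rw [Finset.mul_sum]; exact Finset.sum_congr rfl fun i _ => by ring]
      rw [huu, mul_one]
    have hterm : (d r * u r)^2 ≤ ∑ i, (d i * u i)^2 :=
      Finset.single_le_sum (f := fun i => (d i * u i)^2) (fun i _ => sq_nonneg _)
        (Finset.mem_univ r)
    have hch : lmin * (d r * u r)^2 ≤ lmax * (d s)^2 := by
      calc lmin * (d r * u r)^2 ≤ lmin * ∑ i, (d i * u i)^2 :=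
            mul_le_mul_of_nonneg_left hterm hlminpos.le
        _ ≤ u ⬝ᵥ M *ᵥ u := hlow u
        _ = Λ s := hq
        _ ≤ lmax * (d s)^2 := ost_high s
    -- conclude |u r| * d r ≤ κ * d s
    rw [le_div_iff₀ hmin]
    have hsq : (|U r s| * d r)^2 ≤ (κ * d s)^2 := by
      have h1 : (|U r s| * d r)^2 = (d r * u r)^2 := by
        rw [mul_pow, mul_pow, sq_abs]; ring
      rw [h1]
      have h2 : (d r * u r)^2 ≤ κ * (d s)^2 := by
        rw [← hκlmin] at hch
        have := (mul_le_mul_iff_right₀ hlminpos).mp (by linarith [hch] : lmin * (d r * u r)^2 ≤ lmin * (κ * (d s)^2))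
        linarith
      calc (d r * u r)^2 ≤ κ * (d s)^2 := h2
        _ ≤ κ^2 * (d s)^2 := by nlinarith [sq_nonneg (d s)]
        _ = (κ * d s)^2 := by ring
    have h0l : 0 ≤ |U r s| * d r := mul_nonneg (abs_nonneg _) (hd0 r)
    have h0r : 0 ≤ κ * d s := mul_nonneg hκpos.le (hd0 s)
    nlinarith [hsq, h0l, h0r]
  · -- s ≤ r : min = s, max = r
    rw [min_eq_right hsr] at hmin ⊢
    rw [max_eq_left hsr]
    set u : Fin K → ℝ := fun i => U i s with hu
    have huu : u ⬝ᵥ u = 1 := by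
      have h := congrFun (congrFun hU s) s
      simpa [Matrix.mul_apply, Matrix.one_apply, dotProduct, transpose_apply,
        mul_comm] using h
    have hq : u ⬝ᵥ M *ᵥ u = Λ s := by
      rw [← hM] at hUeig
      rw [hUeig s]
      simp only [dotProduct, Pi.smul_apply, smul_eq_mul]
      rw [show ∑ i, u i * (Λ s * u i) = Λ s * (u ⬝ᵥ u) by
        simp [dotProduct]; rw [Finset.mul_sum]; exact Finset.sum_congr rfl fun i _ => by ring]
      rw [huu, mul_one]
    have hΛpos : 0 < Λ s :=
      lt_of_lt_of_le (by positivity) (ost_low s)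
    set w : Fin K → ℝ := fun i => d i * u i with hw
    -- eigen-equation componentwise at r
    have hcomp : Λ s * u r = d r * ((A *ᵥ w) r) := by
      rw [← hM] at hUeig
      have h := congrFun (hUeig s) r
      have hMr : (M *ᵥ u) r = d r * ((A *ᵥ w) r) := by
        have h1 : diagonal d *ᵥ u = w := by
          funext i; exact mulVec_diagonal d u i
        rw [hM, ← mulVec_mulVec, ← mulVec_mulVec, h1]
        exact mulVec_diagonal d (A *ᵥ w) r
      rw [hMr] at h
      simp only [Pi.smul_apply, smul_eq_mul] at h
      linarith [h]
    -- bound on (A *ᵥ w) r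
    have hwAw : w ⬝ᵥ A *ᵥ w = Λ s := by
      rw [← hquadM u, hq]
    have hAA : A * A = V * diagonal (fun i => (μ i)^2) * Vᵀ := by
      rw [hspec]
      have : diagonal μ * (Vᵀ * V) * diagonal μ = diagonal fun i => (μ i)^2 := by
        rw [hV1, mul_one, diagonal_mul_diagonal]
        congr 1
        funext i; ring
      calc V * diagonal μ * Vᵀ * (V * diagonal μ * Vᵀ)
          = V * (diagonal μ * (Vᵀ * V) * diagonal μ) * Vᵀ := by
            simp only [Matrix.mul_assoc]
        _ = V * (diagonal fun i => (μ i)^2) * Vᵀ := by rw [this]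
    have hAT : Aᵀ = A := by
      have := hA.1
      rw [Matrix.IsHermitian, conjTranspose_eq_transpose_of_trivial] at this
      exact this
    have h1w : w ᵥ* A = A *ᵥ w := by
      nth_rewrite 1 [← hAT]
      rw [vecMul_transpose]
    have hAwAw : (A *ᵥ w) ⬝ᵥ (A *ᵥ w) = w ⬝ᵥ (A * A) *ᵥ w := by
      calc (A *ᵥ w) ⬝ᵥ (A *ᵥ w) = (w ᵥ* A) ⬝ᵥ (A *ᵥ w) := by rw [h1w]
        _ = w ⬝ᵥ (A *ᵥ (A *ᵥ w)) := (dotProduct_mulVec w A (A *ᵥ w)).symm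
        _ = w ⬝ᵥ (A * A) *ᵥ w := by rw [mulVec_mulVec]
    have hAwsum : (A *ᵥ w) ⬝ᵥ (A *ᵥ w) ≤ lmax * Λ s := by
      rw [hAwAw, stmt9.quadform V (A * A) (fun i => (μ i)^2) hAA w]
      have hr : w ⬝ᵥ A *ᵥ w = ∑ i, μ i * ((Vᵀ *ᵥ w) i)^2 := stmt9.quadform V A μ hspec w
      calc ∑ i, (μ i)^2 * ((Vᵀ *ᵥ w) i)^2
          ≤ ∑ i, lmax * (μ i * ((Vᵀ *ᵥ w) i)^2) := by
            apply Finset.sum_le_sum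
            intro i _
            have h1 : 0 ≤ μ i * ((Vᵀ *ᵥ w) i)^2 := mul_nonneg (hμpos i).le (sq_nonneg _)
            have h2 : μ i ≤ lmax := (hbounds i).2
            nlinarith [sq_nonneg ((Vᵀ *ᵥ w) i)]
        _ = lmax * ∑ i, μ i * ((Vᵀ *ᵥ w) i)^2 := by rw [Finset.mul_sum]
        _ = lmax * Λ s := by rw [← hr, hwAw]
    have hArsq : ((A *ᵥ w) r)^2 ≤ lmax * Λ s := by
      refine le_trans ?_ hAwsum
      have : (A *ᵥ w) ⬝ᵥ (A *ᵥ w) = ∑ i, ((A *ᵥ w) i)^2 := by simp [dotProduct, sq]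
      rw [this]
      exact Finset.single_le_sum (f := fun i => ((A *ᵥ w) i)^2) (fun i _ => sq_nonneg _)
        (Finset.mem_univ r)
    -- (Λ s  u r)² ≤ d r² lmax Λ s
    have hkey : (Λ s)^2 * (u r)^2 ≤ (d r)^2 * (lmax * Λ s) := by
      have : (Λ s * u r)^2 = (d r)^2 * ((A *ᵥ w) r)^2 := by rw [hcomp]; ring
      calc (Λ s)^2 * (u r)^2 = (Λ s * u r)^2 := by ring
        _ = (d r)^2 * ((A *ᵥ w) r)^2 := this
        _ ≤ (d r)^2 * (lmax * Λ s) := mul_le_mul_of_nonneg_left hArsq (sq_nonneg _)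
    have hkey2 : Λ s * (u r)^2 ≤ (d r)^2 * lmax := by
      have h := hkey
      rw [show (Λ s)^2 * (u r)^2 = Λ s * (Λ s * (u r)^2) by ring,
        show (d r)^2 * (lmax * Λ s) = Λ s * ((d r)^2 * lmax) by ring] at h
      exact (mul_le_mul_iff_right₀ hΛpos).mp h
    have hlowΛ : lmin * (d s)^2 ≤ Λ s := ost_low s
    have hstep : lmin * (d s)^2 * (u r)^2 ≤ (d r)^2 * lmax := by
      calc lmin * (d s)^2 * (u r)^2 ≤ Λ s * (u r)^2 :=
            mul_le_mul_of_nonneg_right hlowΛ (sq_nonneg _)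
        _ ≤ (d r)^2 * lmax := hkey2
    -- conclude via κ
    rw [le_div_iff₀ hmin]
    have hsq : (|U r s| * d s)^2 ≤ (κ * d r)^2 := by
      have h1 : (|U r s| * d s)^2 = (d s)^2 * (u r)^2 := by
        rw [mul_pow, sq_abs]; ring
      rw [h1]
      have h2 : (d s)^2 * (u r)^2 ≤ κ * (d r)^2 := by
        rw [← hκlmin] at hstep
        have := (mul_le_mul_iff_right₀ hlminpos).mp
          (by linarith [hstep] : lmin * ((d s)^2 * (u r)^2) ≤ lmin * (κ * (d r)^2))
        linarith
      calc (d s)^2 * (u r)^2 ≤ κ * (d r)^2 := h2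
        _ ≤ κ^2 * (d r)^2 := by nlinarith [sq_nonneg (d r)]
        _ = (κ * d r)^2 := by ring
    have h0l : 0 ≤ |U r s| * d s := mul_nonneg (abs_nonneg _) (hd0 s)
    have h0r : 0 ≤ κ * d r := mul_nonneg hκpos.le (hd0 r)
    nlinarith [hsq, h0l, h0r]
end

section
/- Let n, p, K be positive integers and let L ∈ ℝ^{p×K} and C ∈ ℝ^{n×K}. Suppose (C¹, L¹) and (C², L²), with Cᵃ ∈ ℝ^{n×K} and Lᵃ ∈ ℝ^{p×K} for a = 1, 2, both satisfy: Lᵃ(Cᵃ)ᵀ = L Cᵀ, n^{-1}(Cᵃ)ᵀCᵃ = I_K, and (n/p)(Lᵃ)ᵀLᵃ = diag(λᵃ₁,…,λᵃ_K) with λᵃ₁ > λᵃ₂ > ⋯ > λᵃ_K > 0. Then λ¹_r = λ²_r for every r ∈ {1,…,K}, and for each r ∈ {1,…,K} there exists a sign a_r ∈ {−1, 1} such that the r-th columns satisfy C²_{·r} = a_r C¹_{·r} and L²_{·r} = a_r L¹_{·r}. -/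
open Matrix BigOperators

/-- identifiability under the IC3 conditions: if `(C¹, L¹)` and
`(C², L²)` both satisfy `Lᵃ(Cᵃ)ᵀ = L Cᵀ`, `n⁻¹(Cᵃ)ᵀCᵃ = I_K`, and
`(n/p)(Lᵃ)ᵀLᵃ = diag(λᵃ)` with strictly decreasing positive diagonal, then the
eigenvalue sequences coincide and the columns agree up to sign. -/
theorem stmt12 (n p K : ℕ) (hn : 0 < n) (hp : 0 < p) (hK : 0 < K)
    (L : Matrix (Fin p) (Fin K) ℝ) (C : Matrix (Fin n) (Fin K) ℝ)
    (C₁ C₂ : Matrix (Fin n) (Fin K) ℝ) (L₁ L₂ : Matrix (Fin p) (Fin K) ℝ)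
    (lam₁ lam₂ : Fin K → ℝ)
    (h₁fac : L₁ * C₁ᵀ = L * Cᵀ)
    (h₂fac : L₂ * C₂ᵀ = L * Cᵀ)
    (h₁C : (n : ℝ)⁻¹ • (C₁ᵀ * C₁) = 1)
    (h₂C : (n : ℝ)⁻¹ • (C₂ᵀ * C₂) = 1)
    (h₁L : ((n : ℝ) / p) • (L₁ᵀ * L₁) = Matrix.diagonal lam₁)
    (h₂L : ((n : ℝ) / p) • (L₂ᵀ * L₂) = Matrix.diagonal lam₂)
    (h₁anti : StrictAnti lam₁) (h₂anti : StrictAnti lam₂)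
    (h₁pos : ∀ r, 0 < lam₁ r) (h₂pos : ∀ r, 0 < lam₂ r) :
    (∀ r : Fin K, lam₁ r = lam₂ r) ∧
    (∀ r : Fin K, ∃ a : ℝ, (a = 1 ∨ a = -1) ∧
      (∀ i : Fin n, C₂ i r = a * C₁ i r) ∧
      (∀ g : Fin p, L₂ g r = a * L₁ g r)) := by
  have hnn : (n : ℝ) ≠ 0 := Nat.cast_ne_zero.mpr hn.ne'
  have hpn : (p : ℝ) ≠ 0 := Nat.cast_ne_zero.mpr hp.ne'
  have hnp : ((n : ℝ) / p) ≠ 0 := div_ne_zero hnn hpn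
  -- unscaled Gram identities
  have hC1 : C₁ᵀ * C₁ = (n : ℝ) • (1 : Matrix (Fin K) (Fin K) ℝ) := by
    have := congrArg (fun M => (n : ℝ) • M) h₁C
    simpa [smul_smul, mul_inv_cancel₀ hnn] using this
  have hC2 : C₂ᵀ * C₂ = (n : ℝ) • (1 : Matrix (Fin K) (Fin K) ℝ) := by
    have := congrArg (fun M => (n : ℝ) • M) h₂C
    simpa [smul_smul, mul_inv_cancel₀ hnn] using this
  set S : Matrix (Fin K) (Fin K) ℝ := (n : ℝ)⁻¹ • (C₂ᵀ * C₁) with hSdef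
  -- Step 1 : L₂ * S = L₁
  have hfac : L₂ * C₂ᵀ = L₁ * C₁ᵀ := h₂fac.trans h₁fac.symm
  have hL1 : L₂ * S = L₁ := by
    calc L₂ * S = (n : ℝ)⁻¹ • (L₂ * C₂ᵀ * C₁) := by
          rw [hSdef, Matrix.mul_smul, Matrix.mul_assoc]
      _ = (n : ℝ)⁻¹ • (L₁ * (C₁ᵀ * C₁)) := by rw [hfac, Matrix.mul_assoc]
      _ = L₁ := by rw [hC1, Matrix.mul_smul, Matrix.mul_one, smul_smul,
            inv_mul_cancel₀ hnn, one_smul]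
  -- Step 2 : S * C₁ᵀ = C₂ᵀ
  have hdiagmul : Matrix.diagonal lam₂ * C₂ᵀ = Matrix.diagonal lam₂ * (S * C₁ᵀ) := by
    have h : L₂ᵀ * L₂ * C₂ᵀ = (L₂ᵀ * L₂) * (S * C₁ᵀ) := by
      calc L₂ᵀ * L₂ * C₂ᵀ = L₂ᵀ * (L₂ * C₂ᵀ) := by rw [Matrix.mul_assoc]
        _ = L₂ᵀ * (L₂ * S * C₁ᵀ) := by rw [hfac, hL1]
        _ = (L₂ᵀ * L₂) * (S * C₁ᵀ) := by rw [Matrix.mul_assoc, Matrix.mul_assoc]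
    rw [← h₂L, Matrix.smul_mul, Matrix.smul_mul, h]
  have hinvd : (Matrix.diagonal fun i => (lam₂ i)⁻¹ * lam₂ i) = (1 : Matrix (Fin K) (Fin K) ℝ) := by
    have h : (fun i => (lam₂ i)⁻¹ * lam₂ i) = fun _ : Fin K => (1 : ℝ) :=
      funext fun i => inv_mul_cancel₀ (h₂pos i).ne'
    rw [h, Matrix.diagonal_one]
  have hC2t : C₂ᵀ = S * C₁ᵀ := by
    have := congrArg (fun M => Matrix.diagonal (fun r => (lam₂ r)⁻¹) * M) hdiagmul
    simp only [← Matrix.mul_assoc, Matrix.diagonal_mul_diagonal] at this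
    rw [hinvd, Matrix.one_mul, Matrix.one_mul] at this
    exact this
  -- Step 3 : S is orthogonal
  have hSSt : S * Sᵀ = 1 := by
    have h : (n : ℝ) • (S * Sᵀ) = (n : ℝ) • (1 : Matrix (Fin K) (Fin K) ℝ) := by
      calc (n : ℝ) • (S * Sᵀ) = S * ((n : ℝ) • Sᵀ) := by
            rw [Matrix.mul_smul]
        _ = S * (C₁ᵀ * C₂) := by
            rw [hSdef, Matrix.transpose_smul, Matrix.transpose_mul,
              Matrix.transpose_transpose, smul_smul, mul_inv_cancel₀ hnn, one_smul]
        _ = (S * C₁ᵀ) * C₂ := by rw [Matrix.mul_assoc]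
        _ = C₂ᵀ * C₂ := by rw [← hC2t]
        _ = (n : ℝ) • 1 := hC2
    exact smul_right_injective _ hnn h
  have hStS : Sᵀ * S = 1 := mul_eq_one_comm.mp hSSt
  clear_value S
  -- Step 5 : diag lam₂ * S = S * diag lam₁
  have hdiag1 : Matrix.diagonal lam₁ = Sᵀ * Matrix.diagonal lam₂ * S := by
    rw [← h₁L, ← h₂L, ← hL1, Matrix.transpose_mul, Matrix.mul_smul, Matrix.smul_mul]
    congr 1
    simp only [Matrix.mul_assoc]
  have hcomm : S * Matrix.diagonal lam₁ = Matrix.diagonal lam₂ * S := by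
    calc S * Matrix.diagonal lam₁ = S * (Sᵀ * Matrix.diagonal lam₂ * S) := by rw [hdiag1]
      _ = (S * Sᵀ) * Matrix.diagonal lam₂ * S := by
          rw [Matrix.mul_assoc, Matrix.mul_assoc, Matrix.mul_assoc]
      _ = Matrix.diagonal lam₂ * S := by rw [hSSt, Matrix.one_mul]
  have hent : ∀ q r, S q r * lam₁ r = lam₂ q * S q r := by
    intro q r
    have := congrFun (congrFun hcomm q) r
    simpa [Matrix.mul_diagonal, Matrix.diagonal_mul] using this
  have hne : ∀ q r, S q r ≠ 0 → lam₁ r = lam₂ q := by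
    intro q r h
    have := hent q r
    rw [mul_comm (lam₂ q) (S q r)] at this
    exact mul_left_cancel₀ h this
  -- column sums of squares are 1
  have hcol : ∀ r, ∑ q, S q r * S q r = 1 := by
    intro r
    have := congrFun (congrFun hStS r) r
    simpa [Matrix.mul_apply, Matrix.transpose_apply, Matrix.one_apply] using this
  have hexists : ∀ r, ∃ q, S q r ≠ 0 := by
    intro r
    by_contra h
    push_neg at h
    have : (0 : ℝ) = 1 := by
      rw [← hcol r]
      exact (Finset.sum_eq_zero (fun q _ => by rw [h q, mul_zero])).symm
    norm_num at this
  -- the permutation argument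
  choose q hq using hexists
  have hlam : ∀ r, lam₁ r = lam₂ (q r) := fun r => hne (q r) r (hq r)
  have hqinj : Function.Injective q := by
    intro r r' h
    apply h₁anti.injective
    rw [hlam r, hlam r', h]
  have hqmono : StrictMono q := by
    intro r r' hlt
    have : lam₂ (q r') < lam₂ (q r) := by
      rw [← hlam r, ← hlam r']
      exact h₁anti hlt
    exact h₂anti.lt_iff_gt.mp this
  have hqid : q = id := by
    have hbij : Function.Bijective q := Finite.injective_iff_bijective.mp hqinj
    have hr : Set.range q = Set.range (id : Fin K → Fin K) := by
      rw [Set.range_id]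
      exact Set.range_eq_univ.mpr hbij.surjective
    haveI : WellFoundedLT (Fin K) := inferInstance
    exact (hqmono.range_inj (strictMono_id (α := Fin K))).mp hr
  have hlameq : ∀ r, lam₁ r = lam₂ r := by
    intro r
    rw [hlam r, hqid]; rfl
  refine ⟨hlameq, ?_⟩
  -- off-diagonal entries of S vanish
  have hoff : ∀ q' r, q' ≠ r → S q' r = 0 := by
    intro q' r hqr
    by_contra h
    exact hqr (h₂anti.injective ((hlameq r).symm.trans (hne q' r h)).symm)
  -- diagonal entries are ±1
  intro r
  have hsq : ∑ q, S q r * S q r = S r r * S r r :=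
    Finset.sum_eq_single r (fun q' _ hq' => by rw [hoff q' r hq', zero_mul])
      (fun h => absurd (Finset.mem_univ r) h)
  have hdsq : S r r * S r r = 1 := hsq.symm.trans (hcol r)
  refine ⟨S r r, mul_self_eq_one_iff.mp hdsq, ?_, ?_⟩
  · intro i
    have hent' : C₂ i r = ∑ j, S r j * C₁ i j := by
      have := congrFun (congrFun hC2t r) i
      simpa [Matrix.transpose_apply, Matrix.mul_apply] using this
    have hsum : ∑ j, S r j * C₁ i j = S r r * C₁ i r :=
      Finset.sum_eq_single r (fun j _ hj => by rw [hoff r j (Ne.symm hj), zero_mul])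
        (fun h => absurd (Finset.mem_univ r) h)
    exact hent'.trans hsum
  · intro g
    have hL2 : L₂ = L₁ * Sᵀ := by
      rw [← hL1, Matrix.mul_assoc, hSSt, Matrix.mul_one]
    have hent' : L₂ g r = ∑ j, L₁ g j * S r j := by
      have := congrFun (congrFun hL2 g) r
      simpa [Matrix.mul_apply, Matrix.transpose_apply] using this
    have hsum : ∑ j, L₁ g j * S r j = L₁ g r * S r r :=
      Finset.sum_eq_single r (fun j _ hj => by rw [hoff r j (Ne.symm hj), mul_zero])
        (fun h => absurd (Finset.mem_univ r) h)
    exact (hent'.trans hsum).trans (mul_comm _ _)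
end

section
/- Let E be a finite-dimensional real inner product space and let S and T be subspaces of E. Let U = P_{S^⊥}(T) be the image of T under the orthogonal projection P_{S^⊥} of E onto the orthogonal complement S^⊥ of S. Then the orthogonal projection of E onto (S + T)^⊥ equals the composition P_{U^⊥} ∘ P_{S^⊥}, where P_{U^⊥} is the orthogonal projection of E onto the orthogonal complement of U. -/
open Submodule

/-- projection identity `P_{(S+T)^⊥} = P_{U^⊥} ∘ P_{S^⊥}` with
`U = P_{S^⊥}(T)`: in a finite-dimensional real inner product space, the orthogonal
projection onto `(S + T)^⊥` equals the composition of the orthogonal projection onto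
`U^⊥` with the orthogonal projection onto `S^⊥`, where `U` is the image of `T` under
the orthogonal projection onto `S^⊥`. -/
theorem stmt14 (E : Type*) [NormedAddCommGroup E] [InnerProductSpace ℝ E]
    [FiniteDimensional ℝ E]
    (S T : Submodule ℝ E)
    (U : Submodule ℝ E)
    (hU : U = T.map (Sᗮ.subtypeL.comp (orthogonalProjection Sᗮ)).toLinearMap) :
    ((S ⊔ T)ᗮ).subtypeL.comp (orthogonalProjection (S ⊔ T)ᗮ)
      = (Uᗮ.subtypeL.comp (orthogonalProjection Uᗮ)).comp
          (Sᗮ.subtypeL.comp (orthogonalProjection Sᗮ)) := by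
  have hUS : U ≤ Sᗮ := by
    rintro u hu
    rw [hU] at hu
    obtain ⟨t, ht, rfl⟩ := hu
    exact SetLike.coe_mem _
  ext x
  simp only [ContinuousLinearMap.coe_comp', Function.comp_apply, Submodule.coe_subtypeL',
    Submodule.coe_subtype]
  set y : E := (orthogonalProjection Sᗮ x : E) with hy
  set v : E := (orthogonalProjection Uᗮ y : E) with hv
  -- v ∈ Sᗮ
  have hvS : v ∈ Sᗮ := by
    have h1 : y - v ∈ U := by
      have := sub_starProjection_mem_orthogonal (K := Uᗮ) y
      rwa [Submodule.orthogonal_orthogonal] at this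
    have : v = y - (y - v) := by abel
    rw [this]
    exact Sᗮ.sub_mem (SetLike.coe_mem _) (hUS h1)
  have hvU : v ∈ Uᗮ := SetLike.coe_mem _
  -- v ∈ (S ⊔ T)ᗮ
  have hvmem : v ∈ (S ⊔ T)ᗮ := by
    rw [Submodule.mem_orthogonal]
    intro w hw
    obtain ⟨s, hs, t, ht, rfl⟩ := Submodule.mem_sup.mp hw
    have hz1 : t - (orthogonalProjection Sᗮ t : E) ∈ S := by
      have := sub_starProjection_mem_orthogonal (K := Sᗮ) t
      rwa [Submodule.orthogonal_orthogonal] at this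
    have hz2 : (orthogonalProjection Sᗮ t : E) ∈ U := by
      rw [hU]; exact ⟨t, ht, rfl⟩
    have e0 : (inner ℝ s v : ℝ) = 0 := hvS s hs
    have e1 : (inner ℝ (t - (orthogonalProjection Sᗮ t : E)) v : ℝ) = 0 := hvS _ hz1
    have e2 : (inner ℝ ((orthogonalProjection Sᗮ t : E)) v : ℝ) = 0 := hvU _ hz2
    have ht' : t = (t - (orthogonalProjection Sᗮ t : E)) +
        (orthogonalProjection Sᗮ t : E) := by abel
    rw [ht', inner_add_left, inner_add_left, e0, e1, e2]
    ring
  -- x - v ∈ S ⊔ T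
  have hxv : x - v ∈ ((S ⊔ T)ᗮ)ᗮ := by
    rw [Submodule.orthogonal_orthogonal]
    have h1 : x - y ∈ S := by
      have := sub_starProjection_mem_orthogonal (K := Sᗮ) x
      rwa [Submodule.orthogonal_orthogonal] at this
    have h2 : y - v ∈ U := by
      have := sub_starProjection_mem_orthogonal (K := Uᗮ) y
      rwa [Submodule.orthogonal_orthogonal] at this
    have hUST : U ≤ S ⊔ T := by
      rw [hU]
      rintro u ⟨t, ht, rfl⟩
      have hs : t - (orthogonalProjection Sᗮ t : E) ∈ S := by
        have := sub_starProjection_mem_orthogonal (K := Sᗮ) t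
        rwa [Submodule.orthogonal_orthogonal] at this
      have : ((Sᗮ.subtypeL.comp (orthogonalProjection Sᗮ)).toLinearMap t : E)
          = t - (t - (orthogonalProjection Sᗮ t : E)) := by simp
      rw [this]
      exact Submodule.sub_mem _ (Submodule.mem_sup_right ht)
        (Submodule.mem_sup_left hs)
    have : x - v = (x - y) + (y - v) := by abel
    rw [this]
    exact Submodule.add_mem _ (Submodule.mem_sup_left h1) (hUST h2)
  exact eq_starProjection_of_mem_orthogonal hvmem hxv
end
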